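/- arXiv:1401.1954 — 4 statements merged into one kernel-verified Lean document; each statement's English description precedes it below -/
import Mathlib

section
/- With m, ξ, ŝ(k) as in the Kou model setup (m(s) = T(σ²s²/2 + bs + λ(λ₊p/(λ₊-s) + λ₋(1-p)/(λ₋+s) - 1)), ξ = λλ₊pT, ŝ(k) = λ₊ - ξ^{1/2}k^{-1/2}), the first derivative satisfies m'(ŝ(k)) = k + O(1) as k → ∞. -/
open Real Filter Asymptotics

set_option maxHeartbeats 1000000 in
theorem kou_cgf_deriv_at_saddle (lamP lamM p lam σ b T : ℝ)
    (hlamP : 1 < lamP) (hlamM : 0 < lamM) (hp : p ∈ Set.Ioo (0:ℝ) 1)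
    (hlam : 0 < lam) (hσ : 0 < σ) (hT : 0 < T)
    (m : ℝ → ℝ)
    (hm : ∀ s ∈ Set.Ioo (-lamM) lamP,
      m s = T * (σ ^ 2 * s ^ 2 / 2 + b * s +
        lam * (lamP * p / (lamP - s) + lamM * (1 - p) / (lamM + s) - 1)))
    (ξ : ℝ) (hξ : ξ = lam * lamP * p * T)
    (shat : ℝ → ℝ) (hshat : ∀ k : ℝ, shat k = lamP - Real.sqrt ξ * k ^ (-(1:ℝ)/2)) :
    (fun k : ℝ => deriv m (shat k) - k) =O[atTop] (fun _ : ℝ => (1:ℝ)) := by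
  obtain ⟨hp0, hp1⟩ := hp
  have hlamP0 : 0 < lamP := lt_trans one_pos hlamP
  have hξ0 : 0 < ξ := by
    rw [hξ]; positivity
  set f : ℝ → ℝ := fun s => T * (σ ^ 2 * s ^ 2 / 2 + b * s +
      lam * (lamP * p / (lamP - s) + lamM * (1 - p) / (lamM + s) - 1)) with hf
  have hderiv : ∀ s : ℝ, s ≠ lamP → s ≠ -lamM →
      HasDerivAt f
        (T * (σ ^ 2 * s + b + lam * (lamP * p / (lamP - s) ^ 2
          - lamM * (1 - p) / (lamM + s) ^ 2))) s := by
    intro s hs1 hs2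
    have hne1 : lamP - s ≠ 0 := sub_ne_zero.mpr (Ne.symm hs1)
    have hne2 : lamM + s ≠ 0 := by
      intro h
      exact hs2 (by linarith [h])
    have h1 : HasDerivAt (fun x : ℝ => lamP - x) (-1) s := by
      simpa using (hasDerivAt_id s).const_sub lamP
    have h1inv : HasDerivAt (fun x : ℝ => (lamP - x)⁻¹) (1 / (lamP - s) ^ 2) s := by
      have := h1.inv hne1
      exact this.congr_deriv (by ring)
    have hA : HasDerivAt (fun x : ℝ => lamP * p / (lamP - x))
        (lamP * p / (lamP - s) ^ 2) s := by
      have := h1inv.const_mul (lamP * p)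
      simpa [div_eq_mul_inv, mul_comm, mul_assoc, mul_left_comm] using this
    have h2 : HasDerivAt (fun x : ℝ => lamM + x) 1 s := by
      simpa using (hasDerivAt_id s).const_add lamM
    have h2inv : HasDerivAt (fun x : ℝ => (lamM + x)⁻¹) (-(1 / (lamM + s) ^ 2)) s := by
      have := h2.inv hne2
      exact this.congr_deriv (by ring)
    have hB : HasDerivAt (fun x : ℝ => lamM * (1 - p) / (lamM + x))
        (-(lamM * (1 - p) / (lamM + s) ^ 2)) s := by
      have := h2inv.const_mul (lamM * (1 - p))
      exact this.congr_deriv (by ring)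
    have hq : HasDerivAt (fun x : ℝ => σ ^ 2 * x ^ 2 / 2 + b * x) (σ ^ 2 * s + b) s := by
      have h3 : HasDerivAt (fun x : ℝ => x ^ 2) (2 * s) s := by
        simpa using hasDerivAt_pow 2 s
      have h4 := ((h3.const_mul (σ ^ 2)).div_const 2).add ((hasDerivAt_id s).const_mul b)
      exact h4.congr_deriv (by ring)
    have hsum := (hq.add ((((hA.add hB).sub_const 1).const_mul lam))).const_mul T
    exact hsum.congr_deriv (by ring)
  rw [isBigO_iff]
  refine ⟨T * (σ ^ 2 * lamP + |b| + lam * (1 - p) / lamM), ?_⟩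
  filter_upwards [eventually_gt_atTop (max 1 (ξ / lamP ^ 2))] with k hk
  have hk1 : 1 < k := lt_of_le_of_lt (le_max_left _ _) hk
  have hk0 : 0 < k := lt_trans one_pos hk1
  have hk2 : ξ / lamP ^ 2 < k := lt_of_le_of_lt (le_max_right _ _) hk
  have hroot : k ^ (-(1:ℝ)/2) = (Real.sqrt k)⁻¹ := by
    rw [show (-(1:ℝ)/2) = -(1/2 : ℝ) by ring, Real.rpow_neg hk0.le,
      ← Real.sqrt_eq_rpow]
  have hsq : (Real.sqrt ξ * k ^ (-(1:ℝ)/2)) ^ 2 = ξ / k := by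
    rw [hroot, mul_pow, Real.sq_sqrt hξ0.le, inv_pow, Real.sq_sqrt hk0.le, div_eq_mul_inv]
  have hgap_pos : 0 < Real.sqrt ξ * k ^ (-(1:ℝ)/2) := by
    have := Real.sqrt_pos.mpr hξ0
    have := Real.rpow_pos_of_pos hk0 (-(1:ℝ)/2)
    positivity
  have hgap_lt : Real.sqrt ξ * k ^ (-(1:ℝ)/2) < lamP := by
    have hlt : (Real.sqrt ξ * k ^ (-(1:ℝ)/2)) ^ 2 < lamP ^ 2 := by
      rw [hsq, div_lt_iff₀ hk0]
      have := (div_lt_iff₀ (by positivity : (0:ℝ) < lamP ^ 2)).mp hk2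
      nlinarith
    exact lt_of_pow_lt_pow_left₀ 2 hlamP0.le hlt
  have hs := hshat k
  set s := shat k with hsdef
  clear_value s
  have hslt : s < lamP := by rw [hs]; linarith
  have hs0 : 0 < s := by rw [hs]; linarith
  have hmem : s ∈ Set.Ioo (-lamM) lamP := ⟨by linarith, hslt⟩
  have heq : m =ᶠ[nhds s] f := Filter.eventuallyEq_of_mem (isOpen_Ioo.mem_nhds hmem) hm
  have hdm : deriv m s = T * (σ ^ 2 * s + b + lam * (lamP * p / (lamP - s) ^ 2
      - lamM * (1 - p) / (lamM + s) ^ 2)) := by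
    rw [heq.deriv_eq, (hderiv s (ne_of_lt hslt) (by intro h; rw [h] at hs0; linarith)).deriv]
  have h2sq : (lamP - s) ^ 2 = ξ / k := by rw [hs]; rw [show lamP - (lamP - Real.sqrt ξ * k ^ (-(1:ℝ)/2)) = Real.sqrt ξ * k ^ (-(1:ℝ)/2) by ring, hsq]
  have hkey : T * lam * (lamP * p / (lamP - s) ^ 2) = k := by
    rw [h2sq]
    field_simp
    rw [hξ]; ring
  have hrepr : deriv m s - k = T * σ ^ 2 * s + T * b
      - T * lam * (lamM * (1 - p) / (lamM + s) ^ 2) := by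
    rw [hdm, ← hkey]; ring
  have hc0 : 0 ≤ lamM * (1 - p) / (lamM + s) ^ 2 :=
    div_nonneg (mul_nonneg hlamM.le (by linarith)) (sq_nonneg _)
  have hcle : lamM * (1 - p) / (lamM + s) ^ 2 ≤ (1 - p) / lamM := by
    rw [div_le_div_iff₀ (by positivity) hlamM]
    nlinarith [mul_nonneg (sub_pos.mpr hp1).le (mul_nonneg hlamM.le hs0.le),
      mul_nonneg (sub_pos.mpr hp1).le (sq_nonneg s)]
  rw [hrepr]
  simp only [norm_one, mul_one, Real.norm_eq_abs]
  have h1 : T * σ ^ 2 * s ≤ T * σ ^ 2 * lamP :=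
    mul_le_mul_of_nonneg_left hslt.le (by positivity)
  have h2 : T * b ≤ T * |b| := mul_le_mul_of_nonneg_left (le_abs_self b) hT.le
  have h2' : T * -|b| ≤ T * b := mul_le_mul_of_nonneg_left (neg_abs_le b) hT.le
  have h3 : 0 ≤ T * lam * (lamM * (1 - p) / (lamM + s) ^ 2) :=
    mul_nonneg (mul_nonneg hT.le hlam.le) hc0
  have h4 : T * lam * (lamM * (1 - p) / (lamM + s) ^ 2) ≤ T * lam * ((1 - p) / lamM) :=
    mul_le_mul_of_nonneg_left hcle (by positivity)
  have h5 : 0 ≤ T * σ ^ 2 * s := by positivity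
  have hC : T * (σ ^ 2 * lamP + |b| + lam * (1 - p) / lamM)
      = T * σ ^ 2 * lamP + T * |b| + T * lam * ((1 - p) / lamM) := by ring
  rw [abs_le, hC]
  constructor <;> linarith
end

section
/- With m, ξ, ŝ(k) as in the Kou model setup, the second derivative satisfies m''(ŝ(k)) = 2 ξ^{-1/2} k^{3/2} + O(1) as k → ∞. -/
open Real Filter Asymptotics Topology
lemma kou_hasDerivAt1 (lamP lamM p lam σ b T : ℝ) (x : ℝ)
    (h1 : lamP - x ≠ 0) (h2 : lamM + x ≠ 0) :
    HasDerivAt (fun s => T * (σ ^ 2 * s ^ 2 / 2 + b * s +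
        lam * (lamP * p / (lamP - s) + lamM * (1 - p) / (lamM + s) - 1)))
      (T * σ ^ 2 * x + T * b + T * lam * lamP * p / (lamP - x) ^ 2
        - T * lam * lamM * (1 - p) / (lamM + x) ^ 2) x := by
  have d1 : HasDerivAt (fun s : ℝ => lamP - s) (-1) x := by
    simpa using (hasDerivAt_id x).const_sub lamP
  have d2 : HasDerivAt (fun s : ℝ => lamM + s) 1 x := by
    simpa using (hasDerivAt_id x).const_add lamM
  have i1 := (d1.inv h1).const_mul (lamP * p)
  have i2 := (d2.inv h2).const_mul (lamM * (1 - p))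
  have pA : HasDerivAt (fun s : ℝ => σ ^ 2 * s ^ 2 / 2) (σ ^ 2 * x) x := by
    have h := (hasDerivAt_pow 2 x).const_mul (σ ^ 2 / 2)
    have he : (fun s : ℝ => σ ^ 2 * s ^ 2 / 2) = fun s => σ ^ 2 / 2 * s ^ 2 := by
      funext s; ring
    rw [he]; exact h.congr_deriv (by push_cast; ring)
  have pB : HasDerivAt (fun s : ℝ => b * s) b x := by
    simpa using (hasDerivAt_id x).const_mul b
  have h := (((pA.add pB).add (((i1.add i2).sub_const 1).const_mul lam)).const_mul T)
  have heq : (fun s => T * (σ ^ 2 * s ^ 2 / 2 + b * s +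
        lam * (lamP * p / (lamP - s) + lamM * (1 - p) / (lamM + s) - 1)))
      = (fun s => T * (σ ^ 2 * s ^ 2 / 2 + b * s +
        lam * (lamP * p * (lamP - s)⁻¹ + lamM * (1 - p) * (lamM + s)⁻¹ - 1))) := by
    funext s; ring
  rw [heq]
  refine h.congr_deriv ?_
  field_simp
  ring

lemma kou_hasDerivAt2 (lamP lamM p lam σ T : ℝ) (b : ℝ) (x : ℝ)
    (h1 : lamP - x ≠ 0) (h2 : lamM + x ≠ 0) :
    HasDerivAt (fun s => T * σ ^ 2 * s + T * b + T * lam * lamP * p / (lamP - s) ^ 2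
        - T * lam * lamM * (1 - p) / (lamM + s) ^ 2)
      (T * σ ^ 2 + 2 * T * lam * lamP * p / (lamP - x) ^ 3
        + 2 * T * lam * lamM * (1 - p) / (lamM + x) ^ 3) x := by
  have d1 : HasDerivAt (fun s : ℝ => lamP - s) (-1) x := by
    simpa using (hasDerivAt_id x).const_sub lamP
  have d2 : HasDerivAt (fun s : ℝ => lamM + s) 1 x := by
    simpa using (hasDerivAt_id x).const_add lamM
  have i1 := ((d1.pow 2).inv (pow_ne_zero 2 h1)).const_mul (T * lam * lamP * p)
  have i2 := ((d2.pow 2).inv (pow_ne_zero 2 h2)).const_mul (T * lam * lamM * (1 - p))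
  have pA : HasDerivAt (fun s : ℝ => T * σ ^ 2 * s) (T * σ ^ 2) x := by
    simpa using (hasDerivAt_id x).const_mul (T * σ ^ 2)
  have h := ((pA.add_const (T * b)).add i1).sub i2
  have heq : (fun s => T * σ ^ 2 * s + T * b + T * lam * lamP * p / (lamP - s) ^ 2
        - T * lam * lamM * (1 - p) / (lamM + s) ^ 2)
      = (fun s => (T * σ ^ 2 * s + T * b) + T * lam * lamP * p * ((lamP - s) ^ 2)⁻¹
        - T * lam * lamM * (1 - p) * ((lamM + s) ^ 2)⁻¹) := by
    funext s; ring
  rw [heq]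
  refine h.congr_deriv ?_
  simp only [Pi.pow_apply]
  have h1' : (lamP - x) ^ 2 ≠ 0 := pow_ne_zero 2 h1
  have h2' : (lamM + x) ^ 2 ≠ 0 := pow_ne_zero 2 h2
  field_simp
  ring


theorem kou_cgf_second_deriv_at_saddle (lamP lamM p lam σ b T : ℝ)
    (hlamP : 1 < lamP) (hlamM : 0 < lamM) (hp : p ∈ Set.Ioo (0:ℝ) 1)
    (hlam : 0 < lam) (hσ : 0 < σ) (hT : 0 < T)
    (m : ℝ → ℝ)
    (hm : ∀ s ∈ Set.Ioo (-lamM) lamP,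
      m s = T * (σ ^ 2 * s ^ 2 / 2 + b * s +
        lam * (lamP * p / (lamP - s) + lamM * (1 - p) / (lamM + s) - 1)))
    (ξ : ℝ) (hξ : ξ = lam * lamP * p * T)
    (shat : ℝ → ℝ) (hshat : ∀ k : ℝ, shat k = lamP - Real.sqrt ξ * k ^ (-(1:ℝ)/2)) :
    (fun k : ℝ => deriv (deriv m) (shat k) - 2 * ξ ^ (-(1:ℝ)/2) * k ^ ((3:ℝ)/2))
      =O[atTop] (fun _ : ℝ => (1:ℝ)) := by
  obtain ⟨hp0, hp1⟩ := hp
  have hlamP0 : 0 < lamP := lt_trans one_pos hlamP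
  have hξpos : 0 < ξ := by rw [hξ]; positivity
  have htend : Tendsto (fun k : ℝ => Real.sqrt ξ * k ^ (-(1:ℝ)/2)) atTop (𝓝 0) := by
    have h := (tendsto_rpow_neg_atTop (y := 1/2) (by norm_num)).const_mul (Real.sqrt ξ)
    simpa [neg_div] using h
  have hev1 : ∀ᶠ k : ℝ in atTop, Real.sqrt ξ * k ^ (-(1:ℝ)/2) < lamP :=
    htend.eventually_lt_const hlamP0
  have hev2 : ∀ᶠ k : ℝ in atTop, 0 < k := eventually_gt_atTop 0
  have key : ∀ᶠ k : ℝ in atTop,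
      deriv (deriv m) (shat k) - 2 * ξ ^ (-(1:ℝ)/2) * k ^ ((3:ℝ)/2)
        = T * σ ^ 2 + 2 * T * lam * lamM * (1 - p) / (lamM + shat k) ^ 3 := by
    filter_upwards [hev1, hev2] with k hk1 hk0
    set ε := Real.sqrt ξ * k ^ (-(1:ℝ)/2) with hε
    have hεpos : 0 < ε := mul_pos (Real.sqrt_pos.mpr hξpos) (rpow_pos_of_pos hk0 _)
    have hmem : shat k ∈ Set.Ioo (-lamM) lamP := by
      rw [hshat]
      exact ⟨by linarith, by linarith⟩
    have hIoo : IsOpen (Set.Ioo (-lamM) lamP) := isOpen_Ioo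
    have hne : ∀ x ∈ Set.Ioo (-lamM) lamP, lamP - x ≠ 0 ∧ lamM + x ≠ 0 := by
      intro x hx
      exact ⟨sub_ne_zero.mpr (ne_of_gt hx.2), ne_of_gt (by linarith [hx.1])⟩
    have hdm : ∀ x ∈ Set.Ioo (-lamM) lamP, deriv m x =
        T * σ ^ 2 * x + T * b + T * lam * lamP * p / (lamP - x) ^ 2
          - T * lam * lamM * (1 - p) / (lamM + x) ^ 2 := by
      intro x hx
      have hmeq : m =ᶠ[𝓝 x] (fun s => T * (σ ^ 2 * s ^ 2 / 2 + b * s +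
          lam * (lamP * p / (lamP - s) + lamM * (1 - p) / (lamM + s) - 1))) := by
        filter_upwards [hIoo.mem_nhds hx] with y hy using hm y hy
      rw [hmeq.deriv_eq,
        (kou_hasDerivAt1 lamP lamM p lam σ b T x (hne x hx).1 (hne x hx).2).deriv]
    have hdm2 : deriv (deriv m) (shat k) =
        T * σ ^ 2 + 2 * T * lam * lamP * p / (lamP - shat k) ^ 3
          + 2 * T * lam * lamM * (1 - p) / (lamM + shat k) ^ 3 := by
      have hmeq2 : deriv m =ᶠ[𝓝 (shat k)]
          (fun x => T * σ ^ 2 * x + T * b + T * lam * lamP * p / (lamP - x) ^ 2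
            - T * lam * lamM * (1 - p) / (lamM + x) ^ 2) := by
        filter_upwards [hIoo.mem_nhds hmem] with y hy using hdm y hy
      rw [hmeq2.deriv_eq,
        (kou_hasDerivAt2 lamP lamM p lam σ T b (shat k) (hne _ hmem).1 (hne _ hmem).2).deriv]
    have hds : lamP - shat k = ε := by rw [hshat]; ring
    have hεcube : ε ^ 3 = ξ ^ ((3:ℝ)/2) * k ^ (-((3:ℝ)/2)) := by
      rw [hε, mul_pow]
      congr 1
      · rw [← Real.rpow_natCast (Real.sqrt ξ) 3, Real.sqrt_eq_rpow,
          ← Real.rpow_mul hξpos.le]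
        norm_num
      · rw [← Real.rpow_natCast (k ^ (-(1:ℝ)/2)) 3, ← Real.rpow_mul hk0.le]
        norm_num
    have h2ξ : 2 * T * lam * lamP * p = 2 * ξ := by rw [hξ]; ring
    have hξ32 : (0:ℝ) < ξ ^ ((3:ℝ)/2) := rpow_pos_of_pos hξpos _
    have hk32 : (0:ℝ) < k ^ ((3:ℝ)/2) := rpow_pos_of_pos hk0 _
    have hxi : ξ ^ (-(1:ℝ)/2) = ξ / ξ ^ ((3:ℝ)/2) := by
      rw [eq_div_iff hξ32.ne', ← Real.rpow_add hξpos]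
      norm_num
    have hmain : 2 * T * lam * lamP * p / ε ^ 3 = 2 * ξ ^ (-(1:ℝ)/2) * k ^ ((3:ℝ)/2) := by
      rw [h2ξ, hεcube, Real.rpow_neg hk0.le, hxi]
      field_simp
    rw [hdm2, hds, hmain]
    ring
  have hshattend : Tendsto shat atTop (𝓝 lamP) := by
    have h : Tendsto (fun k : ℝ => lamP - Real.sqrt ξ * k ^ (-(1:ℝ)/2)) atTop
        (𝓝 (lamP - 0)) := tendsto_const_nhds.sub htend
    rw [funext hshat]
    simpa using h
  have hne3 : ((lamM + lamP) ^ 3 : ℝ) ≠ 0 := by positivity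
  have hg : Tendsto (fun k : ℝ => T * σ ^ 2 + 2 * T * lam * lamM * (1 - p) / (lamM + shat k) ^ 3)
      atTop (𝓝 (T * σ ^ 2 + 2 * T * lam * lamM * (1 - p) / (lamM + lamP) ^ 3)) :=
    tendsto_const_nhds.add (tendsto_const_nhds.div
      ((tendsto_const_nhds.add hshattend).pow 3) hne3)
  exact Filter.EventuallyEq.trans_isBigO key (hg.isBigO_one ℝ)
end

section
/- Let m(s) = T(σ²s²/2 + bs + λ(exp(δ²s²/2 + μs) - 1)) with δ, σ, λ, T > 0, μ, b ∈ ℝ, and let ŝ(k) solve m'(ŝ(k)) = k. Then as k → ∞, ŝ(k) = √(2 log k)/δ - μ/δ² + O(log log k / √(log k)). -/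
open Real Filter Asymptotics

lemma merton_expo_id (δ μ w e x : ℝ) (hδ : δ ≠ 0) (hw : w^2 = 2*x) :
    δ^2*(w/δ - μ/δ^2 + e)^2/2 + μ*(w/δ - μ/δ^2 + e)
      = x + δ*w*e + δ^2*e^2/2 - μ^2/(2*δ^2) := by
  have hx : x = w^2/2 := by linarith
  subst hx
  field_simp
  ring

lemma merton_hasDerivAt (δ μ σ b lam T s : ℝ) :
    HasDerivAt (fun s => T * (σ ^ 2 * s ^ 2 / 2 + b * s +
      lam * (Real.exp (δ ^ 2 * s ^ 2 / 2 + μ * s) - 1)))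
      (T * (σ^2*s + b + lam*((δ^2*s+μ)*Real.exp (δ^2*s^2/2 + μ*s)))) s := by
  have h1 : HasDerivAt (fun x:ℝ => δ^2*x^2/2 + μ*x) (δ^2*s+μ) s := by
    have := ((((hasDerivAt_pow 2 s).const_mul (δ^2)).div_const 2).add
      ((hasDerivAt_id s).const_mul μ))
    refine this.congr_deriv ?_
    push_cast
    ring
  have h2 := h1.exp
  have h3 := ((((hasDerivAt_pow 2 s).const_mul (σ^2)).div_const 2).add
      ((hasDerivAt_id s).const_mul b)).add ((h2.sub_const 1).const_mul lam)
  have h4 := h3.const_mul T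
  refine h4.congr_deriv ?_
  push_cast
  ring

lemma merton_hasDerivAt_G (δ μ σ b lam T s : ℝ) :
    HasDerivAt (fun s => T * (σ^2*s + b + lam*((δ^2*s+μ)*Real.exp (δ^2*s^2/2 + μ*s))))
      (T * (σ^2 + lam*((δ^2 + (δ^2*s+μ)^2)*Real.exp (δ^2*s^2/2 + μ*s)))) s := by
  have h1 : HasDerivAt (fun x:ℝ => δ^2*x^2/2 + μ*x) (δ^2*s+μ) s := by
    have := ((((hasDerivAt_pow 2 s).const_mul (δ^2)).div_const 2).add
      ((hasDerivAt_id s).const_mul μ))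
    refine this.congr_deriv ?_
    push_cast
    ring
  have hlin : HasDerivAt (fun x:ℝ => δ^2*x+μ) (δ^2) s := by
    have := ((hasDerivAt_id s).const_mul (δ^2)).add_const μ
    refine this.congr_deriv ?_
    ring
  have h2 := (hlin.mul h1.exp).const_mul lam
  have h3 := (((hasDerivAt_id s).const_mul (σ^2)).add_const b).add h2
  have h4 := h3.const_mul T
  refine h4.congr_deriv ?_
  ring

lemma merton_G_strictMono (δ μ σ b lam T : ℝ) (hδ : 0 < δ) (hσ : 0 < σ) (hlam : 0 < lam)
    (hT : 0 < T) :
    StrictMono (fun s => T * (σ^2*s + b + lam*((δ^2*s+μ)*Real.exp (δ^2*s^2/2 + μ*s)))) := by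
  apply strictMono_of_deriv_pos
  intro s
  rw [(merton_hasDerivAt_G δ μ σ b lam T s).deriv]
  have := Real.exp_pos (δ^2*s^2/2 + μ*s)
  positivity

lemma merton_lin_le_exp (C D : ℝ) : ∀ᶠ x : ℝ in atTop, C*x + D ≤ Real.exp x / 2 := by
  have h := (Real.tendsto_exp_div_pow_atTop 1).eventually_ge_atTop (2*(|C| + |D| + 1))
  filter_upwards [h, eventually_ge_atTop (1:ℝ)] with x h1 h2
  rw [pow_one] at h1
  have hx : (0:ℝ) < x := by linarith
  rw [le_div_iff₀ hx] at h1
  have hC : C*x ≤ |C| * x := by nlinarith [le_abs_self C]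
  have hD : D ≤ |D| * x := by nlinarith [le_abs_self D, abs_nonneg D]
  nlinarith

lemma merton_eps_tendsto (c : ℝ) :
    Filter.Tendsto (fun x : ℝ => c * Real.log x / Real.sqrt x) atTop (nhds 0) := by
  have h : Filter.Tendsto (fun x : ℝ => Real.log x / x ^ (1/2:ℝ)) atTop (nhds 0) :=
    (isLittleO_log_rpow_atTop one_half_pos).tendsto_div_nhds_zero
  have h2 : Filter.Tendsto (fun x : ℝ => Real.log x / Real.sqrt x) atTop (nhds 0) := by
    apply h.congr
    intro x
    rw [Real.sqrt_eq_rpow]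
  have := h2.const_mul c
  simpa [mul_div_assoc] using this

lemma merton_tendsto_sqrt_atTop : Filter.Tendsto Real.sqrt atTop atTop := by
  rw [tendsto_atTop_atTop]
  intro B
  refine ⟨B^2, fun a ha => ?_⟩
  calc B ≤ |B| := le_abs_self B
    _ = Real.sqrt (B^2) := (Real.sqrt_sq_eq_abs B).symm
    _ ≤ Real.sqrt a := Real.sqrt_le_sqrt ha

set_option maxHeartbeats 1000000 in
/-- Lower bound: the value of `m'` at `s₀ - ε` is at most `exp x`. -/
lemma merton_lower (δ μ σ b lam T x q r ℓ ε s : ℝ)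
    (hδ : 0 < δ) (hT : 0 < T) (hlam : 0 < lam)
    (hx1 : 1 ≤ x) (hq1 : 1 ≤ q) (hq2 : q^2 = x) (hr2 : r^2 = 2*x)
    (hrq : r = Real.sqrt 2 * q)
    (hℓ0 : 0 ≤ ℓ) (hexpℓ : Real.exp ℓ = x)
    (hεdef : ε = 2/δ*ℓ/q)
    (hεabs : |ε| < 1/δ)
    (h2ℓ : 2*ℓ ≤ Real.sqrt 2 * x)
    (F7 : T*σ^2*Real.sqrt 2/δ*x + (T*σ^2*|μ|/δ^2 + T*|b|) ≤ Real.exp x / 2)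
    (F8 : T*lam*δ*Real.sqrt 2*Real.exp 1 * x ≤ x^2/2)
    (hs : s = r/δ - μ/δ^2 - ε) :
    T * (σ^2*s + b + lam*((δ^2*s+μ)*Real.exp (δ^2*s^2/2 + μ*s))) ≤ Real.exp x := by
  have hδ' : δ ≠ 0 := ne_of_gt hδ
  have hx0 : (0:ℝ) < x := by linarith
  have hq0 : (0:ℝ) < q := by linarith
  have hs2 : (1:ℝ) ≤ Real.sqrt 2 := by
    rw [show (1:ℝ) = Real.sqrt 1 by simp]
    exact Real.sqrt_le_sqrt (by norm_num)
  have hr0 : (0:ℝ) ≤ r := by rw [hrq]; positivity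
  have hε0 : 0 ≤ ε := by rw [hεdef]; positivity
  have hqx : q ≤ x := by nlinarith
  have hδε : δ*ε ≤ r := by
    have h1 : δ*ε = 2*ℓ/q := by rw [hεdef]; field_simp
    rw [h1, hrq, div_le_iff₀ hq0]
    nlinarith
  have hδrε : δ*r*ε = 2*Real.sqrt 2*ℓ := by
    rw [hεdef, hrq]
    field_simp
  have hε1 : δ^2*ε^2/2 ≤ 1 := by
    have h1 : |ε| * |ε| < (1/δ)*(1/δ) :=
      mul_lt_mul' hεabs.le hεabs (abs_nonneg ε) (by positivity)
    have h2 : ε^2 < 1/δ^2 := by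
      rw [← sq_abs, sq]
      calc |ε| * |ε| < (1/δ)*(1/δ) := h1
        _ = 1/δ^2 := by field_simp
    have h3 : δ^2*(1/δ^2) = 1 := by field_simp
    nlinarith [pow_pos hδ 2]
  have hsalt : s = r/δ - μ/δ^2 + (-ε) := by rw [hs]; ring
  have hexpo : δ^2*s^2/2 + μ*s = x - δ*r*ε + δ^2*ε^2/2 - μ^2/(2*δ^2) := by
    rw [hsalt, merton_expo_id δ μ r (-ε) x hδ' hr2]
    ring
  have hlin : δ^2*s + μ = δ*(r - δ*ε) := by
    rw [hsalt]
    field_simp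
    ring
  have hexple : Real.exp (δ^2*s^2/2 + μ*s) ≤ Real.exp x * (1/x^2) * Real.exp 1 := by
    have h1 : δ^2*s^2/2 + μ*s ≤ x - 2*ℓ + 1 := by
      rw [hexpo, hδrε]
      have h2 : 0 ≤ μ^2/(2*δ^2) := by positivity
      nlinarith
    calc Real.exp (δ^2*s^2/2 + μ*s) ≤ Real.exp (x - 2*ℓ + 1) := Real.exp_le_exp.mpr h1
      _ = Real.exp x * (1/x^2) * Real.exp 1 := by
          rw [show x - 2*ℓ + 1 = x + -ℓ + -ℓ + 1 by ring, Real.exp_add, Real.exp_add,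
            Real.exp_add, Real.exp_neg, hexpℓ]
          field_simp
  have hr_le : r ≤ Real.sqrt 2 * x := by rw [hrq]; nlinarith
  have hterm2 : T*lam*((δ^2*s+μ)*Real.exp (δ^2*s^2/2 + μ*s)) ≤ Real.exp x/2 := by
    have hrδε0 : 0 ≤ r - δ*ε := by linarith
    calc T*lam*((δ^2*s+μ)*Real.exp (δ^2*s^2/2 + μ*s))
        = (T*lam*(δ*(r - δ*ε))) * Real.exp (δ^2*s^2/2 + μ*s) := by rw [hlin]; ring
      _ ≤ (T*lam*(δ*(Real.sqrt 2 * x))) * (Real.exp x * (1/x^2) * Real.exp 1) := by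
          apply mul_le_mul _ hexple (Real.exp_pos _).le (by positivity)
          have h0 : (0:ℝ) ≤ T*lam*δ := by positivity
          nlinarith [mul_nonneg hδ.le hε0]
      _ = (T*lam*δ*Real.sqrt 2*Real.exp 1 * x) * Real.exp x / x^2 := by ring
      _ ≤ (x^2/2) * Real.exp x / x^2 := by
          gcongr
      _ = Real.exp x / 2 := by field_simp
  have hterm1 : T*(σ^2*s + b) ≤ Real.exp x/2 := by
    have hsle : s ≤ Real.sqrt 2*x/δ + |μ|/δ^2 := by
      rw [hs]
      have h1 : r/δ ≤ Real.sqrt 2*x/δ := by gcongr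
      have h2 : -(μ/δ^2) ≤ |μ|/δ^2 := by
        rw [show -(μ/δ^2) = (-μ)/δ^2 by ring]
        gcongr
        exact neg_le_abs μ
      linarith
    have hTσ : (0:ℝ) ≤ T*σ^2 := by positivity
    calc T*(σ^2*s + b) = T*σ^2*s + T*b := by ring
      _ ≤ T*σ^2*(Real.sqrt 2*x/δ + |μ|/δ^2) + T*|b| := by
          have h3 : T*σ^2*s ≤ T*σ^2*(Real.sqrt 2*x/δ + |μ|/δ^2) :=
            mul_le_mul_of_nonneg_left hsle hTσ
          have h4 : T*b ≤ T*|b| := mul_le_mul_of_nonneg_left (le_abs_self b) hT.le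
          linarith
      _ = T*σ^2*Real.sqrt 2/δ*x + (T*σ^2*|μ|/δ^2 + T*|b|) := by ring
      _ ≤ Real.exp x / 2 := F7
  have hsplit : T * (σ^2*s + b + lam*((δ^2*s+μ)*Real.exp (δ^2*s^2/2 + μ*s)))
      = T*(σ^2*s + b) + T*lam*((δ^2*s+μ)*Real.exp (δ^2*s^2/2 + μ*s)) := by ring
  rw [hsplit]
  linarith

set_option maxHeartbeats 1000000 in
/-- Upper bound: the value of `m'` at `s₀ + ε` is at least `exp x`. -/
lemma merton_upper (δ μ σ b lam T x q r ℓ ε s : ℝ)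
    (hδ : 0 < δ) (hT : 0 < T) (hlam : 0 < lam)
    (hx1 : 1 ≤ x) (hq1 : 1 ≤ q) (hq2 : q^2 = x) (hr2 : r^2 = 2*x)
    (hrq : r = Real.sqrt 2 * q)
    (hℓ0 : 0 ≤ ℓ)
    (hεdef : ε = 2/δ*ℓ/q)
    (F4 : 0 ≤ σ^2*(r/δ - μ/δ^2) + b)
    (F5 : 1 ≤ T*lam*δ*r*Real.exp (-(μ^2/(2*δ^2))))
    (hs : s = r/δ - μ/δ^2 + ε) :
    Real.exp x ≤ T * (σ^2*s + b + lam*((δ^2*s+μ)*Real.exp (δ^2*s^2/2 + μ*s))) := by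
  have hδ' : δ ≠ 0 := ne_of_gt hδ
  have hq0 : (0:ℝ) < q := by linarith
  have hr0 : (0:ℝ) ≤ r := by
    rw [hrq]; positivity
  have hε0 : 0 ≤ ε := by rw [hεdef]; positivity
  have hexpo : δ^2*s^2/2 + μ*s = x + δ*r*ε + δ^2*ε^2/2 - μ^2/(2*δ^2) := by
    rw [hs, merton_expo_id δ μ r ε x hδ' hr2]
  have hlin : δ^2*s + μ = δ*(r + δ*ε) := by
    rw [hs]
    field_simp
    ring
  have hE : Real.exp x * Real.exp (-(μ^2/(2*δ^2))) ≤ Real.exp (δ^2*s^2/2 + μ*s) := by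
    rw [← Real.exp_add]
    apply Real.exp_le_exp.mpr
    rw [hexpo]
    nlinarith [mul_nonneg (mul_nonneg hδ.le hr0) hε0, sq_nonneg (δ*ε)]
  have hterm : (T*lam*δ*r*Real.exp (-(μ^2/(2*δ^2)))) * Real.exp x
      ≤ T*lam*((δ^2*s+μ)*Real.exp (δ^2*s^2/2 + μ*s)) := by
    rw [hlin]
    calc (T*lam*δ*r*Real.exp (-(μ^2/(2*δ^2)))) * Real.exp x
        = (T*lam*(δ*r)) * (Real.exp x * Real.exp (-(μ^2/(2*δ^2)))) := by ring
      _ ≤ (T*lam*(δ*(r + δ*ε))) * Real.exp (δ^2*s^2/2 + μ*s) := by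
          apply mul_le_mul _ hE (by positivity) (by positivity)
          have h0 : (0:ℝ) ≤ T*lam := by positivity
          nlinarith [mul_nonneg hδ.le (mul_nonneg hδ.le hε0)]
      _ = T*lam*((δ*(r + δ*ε))*Real.exp (δ^2*s^2/2 + μ*s)) := by ring
  have hfirst : 0 ≤ T*(σ^2*s + b) := by
    have h2 : σ^2*(r/δ - μ/δ^2) + b ≤ σ^2*s + b := by
      rw [hs]
      nlinarith [sq_nonneg σ, mul_nonneg (sq_nonneg σ) hε0]
    nlinarith
  have hsplit : T * (σ^2*s + b + lam*((δ^2*s+μ)*Real.exp (δ^2*s^2/2 + μ*s)))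
      = T*(σ^2*s + b) + T*lam*((δ^2*s+μ)*Real.exp (δ^2*s^2/2 + μ*s)) := by ring
  rw [hsplit]
  calc Real.exp x = 1 * Real.exp x := (one_mul _).symm
    _ ≤ (T*lam*δ*r*Real.exp (-(μ^2/(2*δ^2)))) * Real.exp x :=
        mul_le_mul_of_nonneg_right F5 (Real.exp_pos x).le
    _ ≤ T*lam*((δ^2*s+μ)*Real.exp (δ^2*s^2/2 + μ*s)) := hterm
    _ ≤ T*(σ^2*s + b) + T*lam*((δ^2*s+μ)*Real.exp (δ^2*s^2/2 + μ*s)) := by linarith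

set_option maxHeartbeats 1000000 in
theorem merton_saddle_asymptotics (δ μ σ b lam T : ℝ)
    (hδ : 0 < δ) (hσ : 0 < σ) (hlam : 0 < lam) (hT : 0 < T)
    (m : ℝ → ℝ)
    (hm : ∀ s : ℝ, m s = T * (σ ^ 2 * s ^ 2 / 2 + b * s +
      lam * (Real.exp (δ ^ 2 * s ^ 2 / 2 + μ * s) - 1)))
    (shat : ℝ → ℝ) (hshat : ∀ᶠ k : ℝ in atTop, deriv m (shat k) = k) :
    (fun k : ℝ => shat k - (Real.sqrt (2 * Real.log k) / δ - μ / δ ^ 2))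
      =O[atTop] (fun k : ℝ => Real.log (Real.log k) / Real.sqrt (Real.log k)) := by
  have hδ' : δ ≠ 0 := ne_of_gt hδ
  set g : ℝ → ℝ := fun s => T * (σ^2*s + b + lam*((δ^2*s+μ)*Real.exp (δ^2*s^2/2 + μ*s)))
    with hg
  have hgmono : StrictMono g := merton_G_strictMono δ μ σ b lam T hδ hσ hlam hT
  have hderiv : ∀ s, deriv m s = g s := by
    intro s
    have hmf : m = fun s => T * (σ ^ 2 * s ^ 2 / 2 + b * s +
        lam * (Real.exp (δ ^ 2 * s ^ 2 / 2 + μ * s) - 1)) := funext hm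
    rw [hmf, (merton_hasDerivAt δ μ σ b lam T s).deriv]
  -- tendsto facts
  have hsq : Tendsto (fun x:ℝ => Real.sqrt (2*x)) atTop atTop := by
    have h1 : Tendsto (fun x:ℝ => 2*x) atTop atTop :=
      Tendsto.const_mul_atTop two_pos tendsto_id
    exact merton_tendsto_sqrt_atTop.comp h1
  have hE3 : ∀ᶠ x : ℝ in atTop, |2/δ*Real.log x/Real.sqrt x| < 1/δ := by
    have h := (merton_eps_tendsto (2/δ)).abs
    simp only [abs_zero] at h
    exact h.eventually_lt_const (by positivity)
  have hE4 : ∀ᶠ x : ℝ in atTop, 0 ≤ σ^2*(Real.sqrt (2*x)/δ - μ/δ^2) + b := by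
    have t : Tendsto (fun x:ℝ => σ^2*(Real.sqrt (2*x)/δ - μ/δ^2) + b) atTop atTop := by
      have t1 := hsq.atTop_div_const hδ
      have t2 := tendsto_atTop_add_const_right atTop (-(μ/δ^2)) t1
      have t3 := t2.const_mul_atTop (show (0:ℝ) < σ^2 by positivity)
      have t4 := tendsto_atTop_add_const_right atTop b t3
      apply t4.congr
      intro x
      ring
    exact t.eventually_ge_atTop 0
  have hE5 : ∀ᶠ x : ℝ in atTop,
      1 ≤ T*lam*δ*Real.sqrt (2*x)*Real.exp (-(μ^2/(2*δ^2))) := by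
    have t : Tendsto (fun x:ℝ => T*lam*δ*Real.sqrt (2*x)*Real.exp (-(μ^2/(2*δ^2))))
        atTop atTop :=
      (hsq.const_mul_atTop (show (0:ℝ) < T*lam*δ by positivity)).atTop_mul_const
        (Real.exp_pos _)
    exact t.eventually_ge_atTop 1
  have hE6 : ∀ᶠ x : ℝ in atTop, 2*Real.log x ≤ Real.sqrt 2 * x := by
    have h := Real.isLittleO_log_id_atTop.def (show (0:ℝ) < 1/2 by norm_num)
    filter_upwards [h, eventually_ge_atTop (1:ℝ)] with x h1 h2
    have hx0 : (0:ℝ) < x := by linarith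
    rw [Real.norm_eq_abs, Real.norm_eq_abs, id, abs_of_nonneg hx0.le] at h1
    have hs2 : (1:ℝ) ≤ Real.sqrt 2 := by
      rw [show (1:ℝ) = Real.sqrt 1 by simp]
      exact Real.sqrt_le_sqrt (by norm_num)
    have := le_abs_self (Real.log x)
    nlinarith
  have hE7 := merton_lin_le_exp (T*σ^2*Real.sqrt 2/δ) (T*σ^2*|μ|/δ^2 + T*|b|)
  have hE8 : ∀ᶠ x : ℝ in atTop, T*lam*δ*Real.sqrt 2*Real.exp 1 * x ≤ x^2/2 := by
    filter_upwards [eventually_ge_atTop (2*(T*lam*δ*Real.sqrt 2*Real.exp 1)),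
      eventually_ge_atTop (1:ℝ)] with x h1 h2
    nlinarith [Real.exp_pos 1, Real.sqrt_nonneg 2, mul_pos (mul_pos hT hlam) hδ]
  -- main eventual claim in the variable x (= log k)
  have claim : ∀ᶠ x : ℝ in atTop,
      g (Real.sqrt (2*x)/δ - μ/δ^2 - 2/δ*Real.log x/Real.sqrt x) ≤ Real.exp x ∧
      Real.exp x ≤ g (Real.sqrt (2*x)/δ - μ/δ^2 + 2/δ*Real.log x/Real.sqrt x) ∧
      0 ≤ 2/δ*Real.log x/Real.sqrt x := by
    filter_upwards [eventually_ge_atTop (1:ℝ), hE3, hE4, hE5, hE6, hE7, hE8]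
      with x F1 F3 F4 F5 F6 F7 F8
    have hx0 : (0:ℝ) < x := by linarith
    have hℓ0 : 0 ≤ Real.log x := Real.log_nonneg F1
    have hq1 : 1 ≤ Real.sqrt x := by
      rw [show (1:ℝ) = Real.sqrt 1 by simp]
      exact Real.sqrt_le_sqrt F1
    have hq2 : Real.sqrt x ^ 2 = x := Real.sq_sqrt (by linarith)
    have hr2 : Real.sqrt (2*x) ^ 2 = 2*x := Real.sq_sqrt (by linarith)
    have hrq : Real.sqrt (2*x) = Real.sqrt 2 * Real.sqrt x := Real.sqrt_mul (by norm_num) x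
    have hε0 : 0 ≤ 2/δ*Real.log x/Real.sqrt x := by positivity
    refine ⟨?_, ?_, hε0⟩
    · exact merton_lower δ μ σ b lam T x (Real.sqrt x) (Real.sqrt (2*x)) (Real.log x)
        (2/δ*Real.log x/Real.sqrt x) _ hδ hT hlam F1 hq1 hq2 hr2 hrq hℓ0
        (Real.exp_log hx0) rfl F3 F6 F7 F8 rfl
    · exact merton_upper δ μ σ b lam T x (Real.sqrt x) (Real.sqrt (2*x)) (Real.log x)
        (2/δ*Real.log x/Real.sqrt x) _ hδ hT hlam F1 hq1 hq2 hr2 hrq hℓ0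
        rfl F4 F5 rfl
  -- transfer to k and conclude
  rw [isBigO_iff]
  refine ⟨2/δ, ?_⟩
  have hlog := Real.tendsto_log_atTop
  filter_upwards [hshat, hlog.eventually claim, eventually_gt_atTop (0:ℝ),
    hlog.eventually (Real.tendsto_log_atTop.eventually_ge_atTop 0)]
    with k hk hclaim hk0 hll
  obtain ⟨hlow, hup, hepsnn⟩ := hclaim
  have hgk : g (shat k) = k := by rw [← hderiv]; exact hk
  rw [Real.exp_log hk0] at hlow hup
  have h1 : Real.sqrt (2*Real.log k)/δ - μ/δ^2 - 2/δ*Real.log (Real.log k)/Real.sqrt (Real.log k)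
      ≤ shat k := hgmono.le_iff_le.mp (by rw [hgk]; exact hlow)
  have h2 : shat k ≤ Real.sqrt (2*Real.log k)/δ - μ/δ^2
      + 2/δ*Real.log (Real.log k)/Real.sqrt (Real.log k) :=
    hgmono.le_iff_le.mp (by rw [hgk]; exact hup)
  rw [Real.norm_eq_abs, Real.norm_eq_abs]
  have habs : |shat k - (Real.sqrt (2*Real.log k)/δ - μ/δ^2)|
      ≤ 2/δ*Real.log (Real.log k)/Real.sqrt (Real.log k) := by
    apply abs_le.mpr
    constructor <;> linarith
  have hrhs : 0 ≤ Real.log (Real.log k)/Real.sqrt (Real.log k) :=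
    div_nonneg hll (Real.sqrt_nonneg _)
  rw [abs_of_nonneg hrhs]
  calc |shat k - (Real.sqrt (2*Real.log k)/δ - μ/δ^2)|
      ≤ 2/δ*Real.log (Real.log k)/Real.sqrt (Real.log k) := habs
    _ = 2/δ * (Real.log (Real.log k)/Real.sqrt (Real.log k)) := by ring
end

section
/- Let m(s) = T(σ²s²/2 + bs + λ(exp(δ²s²/2 + μs) - 1)) with δ, σ, λ, T > 0, μ, b ∈ ℝ, and ŝ(k) the solution of m'(ŝ(k)) = k. Then as k → ∞: m(ŝ(k)) = (k/(δ√(2 log k)))(1 + O(log log k / log k)) and m''(ŝ(k)) = δ k √(2 log k) (1 + O(1/√(log k))). -/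
open Real Filter Asymptotics

private lemma tendsto_sqrt_atTop' : Tendsto Real.sqrt atTop atTop := by
  refine tendsto_atTop_atTop.2 fun b => ⟨(max b 1) ^ 2, fun a ha => ?_⟩
  have h1 : (0:ℝ) ≤ max b 1 := le_trans zero_le_one (le_max_right _ _)
  calc b ≤ max b 1 := le_max_left _ _
    _ = Real.sqrt ((max b 1) ^ 2) := by rw [Real.sqrt_sq h1]
    _ ≤ Real.sqrt a := Real.sqrt_le_sqrt ha

private lemma ev_logpow_le (C : ℝ) (n : ℕ) : ∀ᶠ k : ℝ in atTop, C * (Real.log k) ^ n ≤ k := by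
  have h := (Real.isLittleO_pow_log_id_atTop (n := n)).bound
    (show (0:ℝ) < 1 / (|C| + 1) by positivity)
  filter_upwards [h, eventually_ge_atTop (1:ℝ)] with k h1 h2
  have hk0 : (0:ℝ) ≤ k := le_trans zero_le_one h2
  have hL0 : (0:ℝ) ≤ Real.log k := Real.log_nonneg h2
  rw [Real.norm_eq_abs, abs_of_nonneg (pow_nonneg hL0 _), id, Real.norm_eq_abs,
    abs_of_nonneg hk0] at h1
  have hC : C ≤ |C| := le_abs_self C
  have hp : (0:ℝ) ≤ Real.log k ^ n := pow_nonneg hL0 _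
  have h3 : (|C| + 1) * (Real.log k ^ n) ≤ k := by
    rw [div_mul_eq_mul_div, le_div_iff₀ (by positivity)] at h1
    nlinarith
  nlinarith [abs_nonneg C]

private lemma ev_sqrtlog_le (c₁ c₂ : ℝ) : ∀ᶠ k : ℝ in atTop,
    c₁ * Real.sqrt (2 * Real.log k) + c₂ ≤ k / 2 := by
  have h := ev_logpow_le ((|c₁| + 1) * 8) 1
  filter_upwards [h, eventually_ge_atTop (1:ℝ), eventually_ge_atTop (8 * (|c₁| + |c₂| + 1))]
    with k h1 h2 h3
  have hL0 : (0:ℝ) ≤ Real.log k := Real.log_nonneg h2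
  have hs : Real.sqrt (2 * Real.log k) ≤ 2 * Real.log k + 1 := by
    rcases le_or_gt 1 (2 * Real.log k) with h | h
    · have h4 : Real.sqrt (2 * Real.log k) ≤ Real.sqrt ((2 * Real.log k) ^ 2) :=
        Real.sqrt_le_sqrt (by nlinarith)
      rw [Real.sqrt_sq (by linarith)] at h4
      nlinarith
    · have := Real.sqrt_le_sqrt h.le
      rw [Real.sqrt_one] at this
      linarith
  have hs0 : (0:ℝ) ≤ Real.sqrt (2 * Real.log k) := Real.sqrt_nonneg _
  have hc1 : c₁ * Real.sqrt (2 * Real.log k) ≤ |c₁| * (2 * Real.log k + 1) := by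
    calc c₁ * Real.sqrt (2 * Real.log k) ≤ |c₁| * Real.sqrt (2 * Real.log k) := by
          nlinarith [le_abs_self c₁]
      _ ≤ |c₁| * (2 * Real.log k + 1) := by nlinarith [abs_nonneg c₁]
  have h1' : (|c₁| + 1) * 8 * Real.log k ^ 1 ≤ k := h1
  rw [pow_one] at h1'
  nlinarith [abs_nonneg c₁, le_abs_self c₂, abs_nonneg c₂]

private lemma hasDerivAt_quadExp (δ μ : ℝ) (s : ℝ) :
    HasDerivAt (fun x : ℝ => Real.exp (δ ^ 2 * x ^ 2 / 2 + μ * x))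
      ((δ ^ 2 * s + μ) * Real.exp (δ ^ 2 * s ^ 2 / 2 + μ * s)) s := by
  have h1 : HasDerivAt (fun x : ℝ => δ ^ 2 * x ^ 2 / 2 + μ * x) (δ ^ 2 * s + μ) s := by
    have h := (((hasDerivAt_pow 2 s).const_mul (δ ^ 2)).div_const 2).add
      ((hasDerivAt_id s).const_mul μ)
    exact h.congr_deriv (by ring)
  have h2 := h1.exp
  convert h2 using 1
  ring

private lemma hasDerivAt_mFun (δ μ σ b lam T : ℝ) (s : ℝ) :
    HasDerivAt (fun x : ℝ => T * (σ ^ 2 * x ^ 2 / 2 + b * x +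
        lam * (Real.exp (δ ^ 2 * x ^ 2 / 2 + μ * x) - 1)))
      (T * (σ ^ 2 * s + b) + T * lam * ((δ ^ 2 * s + μ) *
        Real.exp (δ ^ 2 * s ^ 2 / 2 + μ * s))) s := by
  have h1 : HasDerivAt (fun x : ℝ => σ ^ 2 * x ^ 2 / 2 + b * x) (σ ^ 2 * s + b) s := by
    have h := (((hasDerivAt_pow 2 s).const_mul (σ ^ 2)).div_const 2).add
      ((hasDerivAt_id s).const_mul b)
    exact h.congr_deriv (by ring)
  have h2 := ((hasDerivAt_quadExp δ μ s).sub_const 1).const_mul lam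
  have h3 := (h1.add h2).const_mul T
  exact h3.congr_deriv (by ring)

private lemma hasDerivAt_FFun (δ μ σ b lam T : ℝ) (s : ℝ) :
    HasDerivAt (fun x : ℝ => T * (σ ^ 2 * x + b) + T * lam * ((δ ^ 2 * x + μ) *
        Real.exp (δ ^ 2 * x ^ 2 / 2 + μ * x)))
      (T * σ ^ 2 + T * lam * (((δ ^ 2 * s + μ) ^ 2 + δ ^ 2) *
        Real.exp (δ ^ 2 * s ^ 2 / 2 + μ * s))) s := by
  have h1 : HasDerivAt (fun x : ℝ => T * (σ ^ 2 * x + b)) (T * σ ^ 2) s := by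
    have h := (((hasDerivAt_id s).const_mul (σ ^ 2)).add_const b).const_mul T
    exact h.congr_deriv (by ring)
  have hlin : HasDerivAt (fun x : ℝ => δ ^ 2 * x + μ) (δ ^ 2) s := by
    have h := ((hasDerivAt_id s).const_mul (δ ^ 2)).add_const μ
    exact h.congr_deriv (by ring)
  have h2 := (hlin.mul (hasDerivAt_quadExp δ μ s)).const_mul (T * lam)
  have h3 := h1.add h2
  exact h3.congr_deriv (by ring)

set_option maxHeartbeats 1000000

theorem merton_cgf_at_saddle (δ μ σ b lam T : ℝ)
    (hδ : 0 < δ) (hσ : 0 < σ) (hlam : 0 < lam) (hT : 0 < T)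
    (m : ℝ → ℝ)
    (hm : ∀ s : ℝ, m s = T * (σ ^ 2 * s ^ 2 / 2 + b * s +
      lam * (Real.exp (δ ^ 2 * s ^ 2 / 2 + μ * s) - 1)))
    (shat : ℝ → ℝ) (hshat : ∀ᶠ k : ℝ in atTop, deriv m (shat k) = k) :
    (fun k : ℝ => m (shat k) / (k / (δ * Real.sqrt (2 * Real.log k))) - 1)
      =O[atTop] (fun k : ℝ => Real.log (Real.log k) / Real.log k) ∧
    (fun k : ℝ => deriv (deriv m) (shat k) / (δ * k * Real.sqrt (2 * Real.log k)) - 1)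
      =O[atTop] (fun k : ℝ => 1 / Real.sqrt (Real.log k)) := by
  have hδ' : δ ≠ 0 := ne_of_gt hδ
  have hδ2 : (0:ℝ) < δ^2 := by positivity
  -- derivatives
  have hmf : m = fun s : ℝ => T * (σ ^ 2 * s ^ 2 / 2 + b * s +
      lam * (Real.exp (δ ^ 2 * s ^ 2 / 2 + μ * s) - 1)) := funext hm
  set F : ℝ → ℝ := fun s => T * (σ ^ 2 * s + b) + T * lam * ((δ ^ 2 * s + μ) *
      Real.exp (δ ^ 2 * s ^ 2 / 2 + μ * s)) with hFdef
  set F2 : ℝ → ℝ := fun s => T * σ ^ 2 + T * lam * (((δ ^ 2 * s + μ) ^ 2 + δ ^ 2) *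
      Real.exp (δ ^ 2 * s ^ 2 / 2 + μ * s)) with hF2def
  have hdm : deriv m = F := by
    funext s
    rw [hmf]
    exact (hasDerivAt_mFun δ μ σ b lam T s).deriv
  have hd2 : deriv (deriv m) = F2 := by
    rw [hdm]
    funext s
    exact (hasDerivAt_FFun δ μ σ b lam T s).deriv
  have hmono : StrictMono F := by
    apply strictMono_of_deriv_pos
    intro s
    rw [(hasDerivAt_FFun δ μ σ b lam T s).deriv]
    positivity
  have heqF : ∀ᶠ k : ℝ in atTop, F (shat k) = k := by
    filter_upwards [hshat] with k hk
    rw [← hdm]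
    exact hk
  -- the L-package of eventual facts
  have hsq : Tendsto (fun y : ℝ => δ * Real.sqrt (2 * y)) atTop atTop := by
    have h1 : Tendsto (fun y : ℝ => (2:ℝ) * y) atTop atTop :=
      tendsto_id.const_mul_atTop two_pos
    have h2 := tendsto_sqrt_atTop'.comp h1
    exact Tendsto.const_mul_atTop hδ h2
  have hc0 : (0:ℝ) < Real.exp (μ^2/(2*δ^2)) := Real.exp_pos _
  have hLpack : ∀ᶠ y : ℝ in atTop,
      8 ≤ y ∧ 1 ≤ Real.log y ∧ (Real.log y)^2 ≤ y ∧ |μ| ≤ δ * Real.sqrt (2*y) ∧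
      1 ≤ δ * Real.sqrt (2*y) ∧
      2 * Real.exp (μ^2/(2*δ^2)) ≤ T * lam * (δ * Real.sqrt (2*y)) ∧
      (T * lam * Real.exp 1) * (δ * Real.sqrt (2*y)) * Real.exp (-(Real.sqrt 2 * Real.log y))
        ≤ Real.exp (μ^2/(2*δ^2)) / 2 := by
    have hA : ∀ᶠ y : ℝ in atTop, (8:ℝ) ≤ y := eventually_ge_atTop 8
    have hB : ∀ᶠ y : ℝ in atTop, 1 ≤ Real.log y := tendsto_log_atTop.eventually_ge_atTop 1
    have hC : ∀ᶠ y : ℝ in atTop, (Real.log y)^2 ≤ y := by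
      filter_upwards [(Real.isLittleO_pow_log_id_atTop (n := 2)).bound one_pos,
        eventually_ge_atTop (1:ℝ)] with y h1 h2
      have hL0 : (0:ℝ) ≤ Real.log y := Real.log_nonneg h2
      rw [Real.norm_eq_abs, abs_of_nonneg (pow_nonneg hL0 _), id, Real.norm_eq_abs,
        abs_of_nonneg (by linarith : (0:ℝ) ≤ y), one_mul] at h1
      exact h1
    have hD : ∀ᶠ y : ℝ in atTop, |μ| ≤ δ * Real.sqrt (2*y) := hsq.eventually_ge_atTop |μ|
    have hE : ∀ᶠ y : ℝ in atTop, 1 ≤ δ * Real.sqrt (2*y) := hsq.eventually_ge_atTop 1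
    have hF' : ∀ᶠ y : ℝ in atTop,
        2 * Real.exp (μ^2/(2*δ^2)) ≤ T * lam * (δ * Real.sqrt (2*y)) := by
      filter_upwards [hsq.eventually_ge_atTop (2 * Real.exp (μ^2/(2*δ^2)) / (T * lam))]
        with y hy
      rw [div_le_iff₀ (by positivity)] at hy
      nlinarith
    have hG : ∀ᶠ y : ℝ in atTop,
        (T * lam * Real.exp 1) * (δ * Real.sqrt (2*y)) *
          Real.exp (-(Real.sqrt 2 * Real.log y)) ≤ Real.exp (μ^2/(2*δ^2)) / 2 := by
      have hb : Tendsto (fun y : ℝ =>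
          (T*lam*Real.exp 1*δ*Real.sqrt 2) * (Real.sqrt y)⁻¹) atTop (nhds 0) := by
        have h := tendsto_sqrt_atTop'.inv_tendsto_atTop
        have h2 := h.const_mul (T*lam*Real.exp 1*δ*Real.sqrt 2)
        simpa using h2
      have h0 : Tendsto (fun y : ℝ => (T * lam * Real.exp 1) * (δ * Real.sqrt (2*y)) *
          Real.exp (-(Real.sqrt 2 * Real.log y))) atTop (nhds 0) := by
        refine squeeze_zero' ?_ ?_ hb
        · filter_upwards [eventually_ge_atTop (1:ℝ)] with y hy
          positivity
        · filter_upwards [eventually_ge_atTop (1:ℝ)] with y hy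
          have hy0 : (0:ℝ) < y := lt_of_lt_of_le one_pos hy
          have hL0 : (0:ℝ) ≤ Real.log y := Real.log_nonneg hy
          have hs2 : (1:ℝ) ≤ Real.sqrt 2 := by
            rw [show (1:ℝ) = Real.sqrt 1 by simp]
            exact Real.sqrt_le_sqrt (by norm_num)
          have h1 : Real.exp (-(Real.sqrt 2 * Real.log y)) ≤ y⁻¹ := by
            calc Real.exp (-(Real.sqrt 2 * Real.log y)) ≤ Real.exp (-(Real.log y)) :=
                Real.exp_le_exp.2 (by nlinarith)
              _ = y⁻¹ := by rw [Real.exp_neg, Real.exp_log hy0]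
          have hsy : (0:ℝ) < Real.sqrt y := Real.sqrt_pos.2 hy0
          have key : Real.exp (-(Real.sqrt 2 * Real.log y)) ≤
              (Real.sqrt y)⁻¹ * (Real.sqrt y)⁻¹ := by
            calc Real.exp (-(Real.sqrt 2 * Real.log y)) ≤ y⁻¹ := h1
              _ = (Real.sqrt y)⁻¹ * (Real.sqrt y)⁻¹ := by
                  rw [← mul_inv, Real.mul_self_sqrt hy0.le]
          have h3 : Real.sqrt (2*y) = Real.sqrt 2 * Real.sqrt y := Real.sqrt_mul (by norm_num) y
          have hii : Real.sqrt y * (Real.sqrt y)⁻¹ = 1 := mul_inv_cancel₀ hsy.ne'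
          rw [h3]
          calc (T * lam * Real.exp 1) * (δ * (Real.sqrt 2 * Real.sqrt y)) *
                Real.exp (-(Real.sqrt 2 * Real.log y))
              ≤ (T * lam * Real.exp 1) * (δ * (Real.sqrt 2 * Real.sqrt y)) *
                ((Real.sqrt y)⁻¹ * (Real.sqrt y)⁻¹) := by
                apply mul_le_mul_of_nonneg_left key (by positivity)
            _ = (T*lam*Real.exp 1*δ*Real.sqrt 2) * ((Real.sqrt y * (Real.sqrt y)⁻¹) *
                (Real.sqrt y)⁻¹) := by ring
            _ = (T*lam*Real.exp 1*δ*Real.sqrt 2) * (Real.sqrt y)⁻¹ := by rw [hii, one_mul]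
      exact (h0.eventually_lt_const (by positivity)).mono fun y hy => le_of_lt hy
    filter_upwards [hA, hB, hC, hD, hE, hF', hG] with y h1 h2 h3 h4 h5 h6 h7
    exact ⟨h1, h2, h3, h4, h5, h6, h7⟩
  have hpack := tendsto_log_atTop.eventually hLpack
  -- upper key bound
  have hkeyU : ∀ᶠ k : ℝ in atTop,
      k ≤ F ((δ * Real.sqrt (2 * Real.log k) - μ) / δ ^ 2) := by
    filter_upwards [hpack, eventually_gt_atTop (0:ℝ), eventually_ge_atTop (-(T*b))]
      with k hp hk0 hkb
    obtain ⟨h8, hLL1, hLL2, hμ, hR1, h2c, -⟩ := hp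
    set L := Real.log k with hLdef
    set W := Real.sqrt (2*L) with hWdef
    have hL0 : (0:ℝ) ≤ L := by linarith only [h8]
    have hW0 : (0:ℝ) ≤ W := Real.sqrt_nonneg _
    have hW2 : W^2 = 2*L := Real.sq_sqrt (by linarith only [hL0])
    have hek : Real.exp L = k := by rw [hLdef]; exact Real.exp_log hk0
    set s := (δ * W - μ) / δ ^ 2 with hsdef
    have hx : δ ^ 2 * s + μ = δ * W := by rw [hsdef]; field_simp; ring
    have hs0 : 0 ≤ s := by
      rw [hsdef]
      apply div_nonneg _ (le_of_lt hδ2)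
      have h2 : μ ≤ |μ| := le_abs_self μ
      linarith only [h2, hμ]
    have hgv : δ ^ 2 * s ^ 2 / 2 + μ * s = L - μ^2/(2*δ^2) := by
      have hgv0 : δ ^ 2 * s ^ 2 / 2 + μ * s = ((δ ^ 2 * s + μ)^2 - μ^2)/(2*δ^2) := by
        field_simp; ring
      rw [hgv0, hx, mul_pow, hW2]
      field_simp
    clear_value s W L
    rw [hFdef]
    show k ≤ T * (σ ^ 2 * s + b) + T * lam * ((δ ^ 2 * s + μ) *
      Real.exp (δ ^ 2 * s ^ 2 / 2 + μ * s))
    rw [hx, hgv]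
    have hexp : Real.exp (L - μ^2/(2*δ^2)) = k * Real.exp (-(μ^2/(2*δ^2))) := by
      rw [show L - μ^2/(2*δ^2) = L + (-(μ^2/(2*δ^2))) by ring, Real.exp_add, hek]
    rw [hexp]
    have hexpc : Real.exp (μ^2/(2*δ^2)) * Real.exp (-(μ^2/(2*δ^2))) = 1 := by
      rw [← Real.exp_add]; simp
    have hkc : (0:ℝ) ≤ k * Real.exp (-(μ^2/(2*δ^2))) := by positivity
    have hmain : 2 * k ≤ T * lam * (δ * W * (k * Real.exp (-(μ^2/(2*δ^2))))) := by
      have h := mul_le_mul_of_nonneg_right h2c hkc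
      calc 2 * k = 2 * Real.exp (μ^2/(2*δ^2)) * (k * Real.exp (-(μ^2/(2*δ^2)))) := by
            linear_combination (2*k) * hexpc.symm
        _ ≤ T * lam * (δ * W) * (k * Real.exp (-(μ^2/(2*δ^2)))) := h
        _ = T * lam * (δ * W * (k * Real.exp (-(μ^2/(2*δ^2))))) := by ring
    have hTs : 0 ≤ T * σ^2 * s := mul_nonneg (mul_nonneg hT.le (sq_nonneg σ)) hs0
    have hgoal : T * (σ ^ 2 * s + b) = T * σ^2 * s + T * b := by ring
    rw [hgoal]
    linarith only [hmain, hTs, hkb, hk0]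
  -- lower key bound
  have hkeyL : ∀ᶠ k : ℝ in atTop,
      F ((δ * Real.sqrt (2 * Real.log k) - μ - δ * Real.log (Real.log k) /
        Real.sqrt (Real.log k)) / δ ^ 2) ≤ k := by
    filter_upwards [hpack, eventually_gt_atTop (0:ℝ),
      ev_sqrtlog_le (T*σ^2/δ) (T*σ^2*|μ|/δ^2 + |T*b|)] with k hp hk0 hA2
    obtain ⟨h8, hLL1, hLL2, hμ, hR1, -, h7⟩ := hp
    set L := Real.log k with hLdef
    set LL := Real.log L with hLLdef
    set v := Real.sqrt L with hvdef
    set W := Real.sqrt (2*L) with hWdef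
    have hL0 : (0:ℝ) < L := by linarith
    have hv0 : (0:ℝ) < v := Real.sqrt_pos.2 hL0
    have hv2 : v^2 = L := Real.sq_sqrt hL0.le
    have hW2 : W^2 = 2*L := Real.sq_sqrt (by linarith)
    have hW0 : (0:ℝ) ≤ W := Real.sqrt_nonneg _
    have hW4 : (4:ℝ) ≤ W := by nlinarith only [hW2, hW0, h8]
    have hWv : W = Real.sqrt 2 * v := by
      rw [hWdef, hvdef, Real.sqrt_mul (by norm_num)]
    have hLL0 : (0:ℝ) ≤ LL := by linarith
    have hLLv : LL ≤ v := by nlinarith only [hLL2, hv2, hLL0, hv0]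
    have hek : Real.exp L = k := by rw [hLdef]; exact Real.exp_log hk0
    set s := (δ * W - μ - δ * LL / v) / δ ^ 2 with hsdef
    have hx : δ ^ 2 * s + μ = δ * W - δ * LL / v := by
      rw [hsdef]; field_simp; ring
    clear_value s W v LL L
    have hgv0 : δ ^ 2 * s ^ 2 / 2 + μ * s = ((δ ^ 2 * s + μ)^2 - μ^2)/(2*δ^2) := by
      field_simp; ring
    have hWLL : W * (LL / v) = Real.sqrt 2 * LL := by
      rw [hWv]; field_simp
    have hx2 : (δ * W - δ * LL / v)^2 =
        δ^2*(2*L) - 2*δ^2*(Real.sqrt 2 * LL) + δ^2*(LL^2/L) := by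
      have e1 : (δ * W - δ * LL / v)^2 =
          δ^2 * W^2 - 2*δ^2*(W * (LL/v)) + δ^2*((LL/v)^2) := by ring
      rw [e1, hW2, hWLL, div_pow, hv2]
    have hgv : δ ^ 2 * s ^ 2 / 2 + μ * s =
        L - Real.sqrt 2 * LL + LL^2/(2*L) - μ^2/(2*δ^2) := by
      rw [hgv0, hx, hx2]
      field_simp
    rw [hFdef]
    show T * (σ ^ 2 * s + b) + T * lam * ((δ ^ 2 * s + μ) *
      Real.exp (δ ^ 2 * s ^ 2 / 2 + μ * s)) ≤ k
    rw [hx, hgv]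
    have hearg : L - Real.sqrt 2 * LL + LL^2/(2*L) - μ^2/(2*δ^2) =
        L + (-(Real.sqrt 2 * LL)) + LL^2/(2*L) + (-(μ^2/(2*δ^2))) := by ring
    have hexp : Real.exp (L - Real.sqrt 2 * LL + LL^2/(2*L) - μ^2/(2*δ^2)) =
        k * Real.exp (-(Real.sqrt 2 * LL)) * Real.exp (LL^2/(2*L)) *
          Real.exp (-(μ^2/(2*δ^2))) := by
      rw [hearg, Real.exp_add, Real.exp_add, Real.exp_add, hek]
    rw [hexp]
    have hmid : Real.exp (LL^2/(2*L)) ≤ Real.exp 1 := by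
      apply Real.exp_le_exp.2
      rw [div_le_one (by positivity)]
      linarith only [hLL2, h8]
    have hlin : T * (σ ^ 2 * s + b) ≤ k / 2 := by
      have hs_ub : s ≤ (δ * W + |μ|) / δ^2 := by
        rw [hsdef]
        gcongr
        have h1 : 0 ≤ δ * LL / v := by positivity
        have h2 : -μ ≤ |μ| := neg_le_abs μ
        linarith only [h1, h2]
      have h3 : T * σ^2 * s ≤ T * σ^2 * ((δ * W + |μ|) / δ^2) :=
        mul_le_mul_of_nonneg_left hs_ub (by positivity)
      have h4 : T * σ^2 * ((δ * W + |μ|) / δ^2) = T*σ^2/δ * W + T*σ^2*|μ|/δ^2 := by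
        field_simp
      have h5 : T * b ≤ |T*b| := le_abs_self _
      have h3' : T * σ^2 * s ≤ T*σ^2/δ * W + T*σ^2*|μ|/δ^2 := by rw [← h4]; exact h3
      have hgoal : T * (σ ^ 2 * s + b) = T * σ^2 * s + T * b := by ring
      rw [hgoal]
      linarith only [h3', h5, hA2]
    have hx0 : 0 ≤ δ * W - δ * LL / v := by
      have h1 : LL / v ≤ 1 := by rw [div_le_one hv0]; exact hLLv
      have h2 : δ * (LL/v) ≤ δ * 1 := mul_le_mul_of_nonneg_left h1 hδ.le
      have h3 : δ * 1 ≤ δ * W := mul_le_mul_of_nonneg_left (by linarith) hδ.le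
      calc (0:ℝ) ≤ δ * W - δ * (LL/v) := by linarith
        _ = δ * W - δ * LL / v := by ring
    have hexpc : Real.exp (μ^2/(2*δ^2)) * Real.exp (-(μ^2/(2*δ^2))) = 1 := by
      rw [← Real.exp_add]; simp
    have hebig : T * lam * ((δ * W - δ * LL / v) *
        (k * Real.exp (-(Real.sqrt 2 * LL)) * Real.exp (LL^2/(2*L)) *
          Real.exp (-(μ^2/(2*δ^2))))) ≤ k / 2 := by
      have hstep1 : T * lam * ((δ * W - δ * LL / v) *
          (k * Real.exp (-(Real.sqrt 2 * LL)) * Real.exp (LL^2/(2*L)) *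
            Real.exp (-(μ^2/(2*δ^2))))) ≤
          T * lam * ((δ * W) *
          (k * Real.exp (-(Real.sqrt 2 * LL)) * Real.exp 1 *
            Real.exp (-(μ^2/(2*δ^2))))) := by
        apply mul_le_mul_of_nonneg_left _ (by positivity)
        have hf1 : 0 ≤ k * Real.exp (-(Real.sqrt 2 * LL)) * Real.exp (LL^2/(2*L)) *
            Real.exp (-(μ^2/(2*δ^2))) := by positivity
        have hf2 : k * Real.exp (-(Real.sqrt 2 * LL)) * Real.exp (LL^2/(2*L)) *
            Real.exp (-(μ^2/(2*δ^2))) ≤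
            k * Real.exp (-(Real.sqrt 2 * LL)) * Real.exp 1 *
            Real.exp (-(μ^2/(2*δ^2))) :=
          mul_le_mul_of_nonneg_right (mul_le_mul_of_nonneg_left hmid
            (by positivity : (0:ℝ) ≤ k * Real.exp (-(Real.sqrt 2 * LL))))
            (Real.exp_pos _).le
        have hδW : δ * W - δ * LL / v ≤ δ * W := by
          have : 0 ≤ δ * LL / v := by positivity
          linarith
        exact mul_le_mul hδW hf2 hf1 (by positivity)
      have hstep2 : T * lam * ((δ * W) *
          (k * Real.exp (-(Real.sqrt 2 * LL)) * Real.exp 1 *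
            Real.exp (-(μ^2/(2*δ^2))))) =
          ((T * lam * Real.exp 1) * (δ * W) * Real.exp (-(Real.sqrt 2 * LL))) *
            (k * Real.exp (-(μ^2/(2*δ^2)))) := by ring
      have hstep3 : ((T * lam * Real.exp 1) * (δ * W) * Real.exp (-(Real.sqrt 2 * LL))) *
            (k * Real.exp (-(μ^2/(2*δ^2)))) ≤
          (Real.exp (μ^2/(2*δ^2)) / 2) * (k * Real.exp (-(μ^2/(2*δ^2)))) := by
        apply mul_le_mul_of_nonneg_right h7 (by positivity)
      have hstep4 : (Real.exp (μ^2/(2*δ^2)) / 2) * (k * Real.exp (-(μ^2/(2*δ^2)))) = k/2 := by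
        linear_combination (k/2) * hexpc
      calc T * lam * ((δ * W - δ * LL / v) *
          (k * Real.exp (-(Real.sqrt 2 * LL)) * Real.exp (LL^2/(2*L)) *
            Real.exp (-(μ^2/(2*δ^2))))) ≤
          T * lam * ((δ * W) * (k * Real.exp (-(Real.sqrt 2 * LL)) * Real.exp 1 *
            Real.exp (-(μ^2/(2*δ^2))))) := hstep1
        _ = ((T * lam * Real.exp 1) * (δ * W) * Real.exp (-(Real.sqrt 2 * LL))) *
            (k * Real.exp (-(μ^2/(2*δ^2)))) := hstep2
        _ ≤ (Real.exp (μ^2/(2*δ^2)) / 2) * (k * Real.exp (-(μ^2/(2*δ^2)))) := hstep3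
        _ = k/2 := hstep4
    linarith only [hlin, hebig]
  -- sandwich for X = δ² ŝ + μ
  have hsand : ∀ᶠ k : ℝ in atTop,
      δ * Real.sqrt (2*Real.log k) - δ * Real.log (Real.log k) / Real.sqrt (Real.log k)
        ≤ δ^2 * shat k + μ ∧ δ^2 * shat k + μ ≤ δ * Real.sqrt (2*Real.log k) := by
    filter_upwards [heqF, hkeyU, hkeyL] with k h1 h2 h3
    constructor
    · have hle : (δ * Real.sqrt (2 * Real.log k) - μ - δ * Real.log (Real.log k) /
          Real.sqrt (Real.log k)) / δ ^ 2 ≤ shat k := by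
        apply hmono.le_iff_le.mp
        rw [h1]
        exact h3
      have h4 := mul_le_mul_of_nonneg_left hle (le_of_lt hδ2)
      have hid : δ^2 * ((δ * Real.sqrt (2 * Real.log k) - μ - δ * Real.log (Real.log k) /
          Real.sqrt (Real.log k)) / δ ^ 2) = δ * Real.sqrt (2 * Real.log k) - μ -
          δ * Real.log (Real.log k) / Real.sqrt (Real.log k) := by field_simp
      rw [hid] at h4
      linarith only [h4]
    · have hle : shat k ≤ (δ * Real.sqrt (2 * Real.log k) - μ) / δ ^ 2 := by
        apply hmono.le_iff_le.mp
        rw [h1]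
        exact h2
      have h4 := mul_le_mul_of_nonneg_left hle (le_of_lt hδ2)
      have hid : δ^2 * ((δ * Real.sqrt (2 * Real.log k) - μ) / δ ^ 2) =
          δ * Real.sqrt (2 * Real.log k) - μ := by field_simp
      rw [hid] at h4
      linarith only [h4]
  -- constants for remainder bounds
  set SA : ℝ := 4*T*σ^2/δ + T*|b| with hSAdef
  set SB : ℝ := 8*T*σ^2/δ^2 + 4*T*|b|/δ + T*lam with hSBdef
  set C0 : ℝ := 2*δ*SB + 2*SA + T*σ^2 + δ + 1 with hC0def
  have hSA0 : 0 ≤ SA := by rw [hSAdef]; positivity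
  have hSB0 : 0 ≤ SB := by rw [hSBdef]; positivity
  have hTσ0 : (0:ℝ) ≤ T*σ^2 := by positivity
  constructor
  · -- first asymptotic
    rw [Asymptotics.isBigO_iff]
    refine ⟨5, ?_⟩
    filter_upwards [heqF, hsand, hpack, ev_logpow_le C0 4, eventually_gt_atTop (0:ℝ)]
      with k heq hs hp hC0' hk0
    simp only [Real.norm_eq_abs]
    obtain ⟨hXl, hXu⟩ := hs
    obtain ⟨h8, hLL1, hLL2, hμ, hR1, -, -⟩ := hp
    simp only [hFdef] at heq
    set L := Real.log k with hLdef
    set LL := Real.log L with hLLdef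
    set v := Real.sqrt L with hvdef
    set W := Real.sqrt (2*L) with hWdef
    set sh := shat k with hshdef
    have hL0 : (0:ℝ) < L := by linarith only [h8]
    have hL1 : (1:ℝ) ≤ L := by linarith only [h8]
    have hv0 : (0:ℝ) < v := Real.sqrt_pos.2 hL0
    have hv2 : v^2 = L := Real.sq_sqrt hL0.le
    have hW0 : (0:ℝ) ≤ W := Real.sqrt_nonneg _
    have hW2 : W^2 = 2*L := Real.sq_sqrt (by linarith only [hL0])
    have hW4 : (4:ℝ) ≤ W := by nlinarith only [hW2, hW0, h8]
    have hWv : W = Real.sqrt 2 * v := by rw [hWdef, hvdef, Real.sqrt_mul (by norm_num)]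
    have hs2 : (1:ℝ) ≤ Real.sqrt 2 := by
      rw [show (1:ℝ) = Real.sqrt 1 by simp]
      exact Real.sqrt_le_sqrt (by norm_num)
    have hv2' : (2:ℝ) ≤ v := by nlinarith only [hv2, h8, hv0]
    have hvL : v ≤ L := by nlinarith only [hv2, hv2']
    have hLL0 : (0:ℝ) ≤ LL := le_trans zero_le_one hLL1
    have hLLv : LL ≤ v := by nlinarith only [hLL2, hv2, hLL0, hv0]
    have hW2v : W ≤ 2*v := by nlinarith only [hW2, hv2, hW0, hv0]
    have hWL : W ≤ 2*L := by linarith only [hW2v, hvL, hv0]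
    have hvW : v ≤ W := by nlinarith only [hWv, hs2, hv0]
    set X := δ^2 * sh + μ with hXdef
    set E := Real.exp (δ ^ 2 * sh ^ 2 / 2 + μ * sh) with hEdef
    have hq : δ * LL / v ≤ δ := by
      rw [div_le_iff₀ hv0]
      nlinarith only [hLLv, hδ, hLL0]
    have hRX : δ*W/2 ≤ X := by
      have h1 : δ ≤ δ*W/2 := by nlinarith only [hW4, hδ]
      linarith only [hXl, hq, h1]
    have hWpos : (0:ℝ) < W := lt_of_lt_of_le (by norm_num) hW4
    have hX0 : (0:ℝ) < X := lt_of_lt_of_le (by positivity) hRX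
    have hsheq : sh = (X - μ)/δ^2 := by rw [hXdef]; field_simp; ring
    have hmval : m sh = T*(σ^2*sh^2/2 + b*sh) + T*lam*E - T*lam := by
      rw [hEdef, hm sh]; ring
    have hE : T*lam*E = (k - T*(σ^2*sh + b))/X := by
      rw [eq_div_iff hX0.ne']
      linear_combination heq
    clear_value sh X E v W LL L
    have hshabs : |sh| ≤ 2*W/δ := by
      rw [hsheq, abs_div, abs_of_pos hδ2, div_le_div_iff₀ hδ2 hδ]
      have h1 : |X - μ| ≤ |X| + |μ| := abs_sub _ _
      have h2 : |X| = X := abs_of_pos hX0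
      have h3 : |X - μ| ≤ 2*(δ*W) := by
        rw [h2] at h1
        linarith only [h1, hμ, hXu]
      calc |X - μ| * δ ≤ (2*(δ*W)) * δ := by
            nlinarith only [h3, hδ, abs_nonneg (X - μ)]
        _ = 2*W*δ^2 := by ring
    have hsh2 : |sh| ≤ 4*L/δ := by
      refine hshabs.trans ?_
      rw [div_le_div_iff₀ hδ hδ]
      nlinarith only [hWL, hδ]
    have hsq2 : sh^2 ≤ 16*L^2/δ^2 := by
      have h1 : sh^2 = |sh|^2 := (sq_abs sh).symm
      have h2 : |sh|^2 ≤ (4*L/δ)^2 := pow_le_pow_left₀ (abs_nonneg sh) hsh2 2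
      have h3 : (4*L/δ)^2 = 16*L^2/δ^2 := by field_simp; ring
      rw [h1, ← h3]; exact h2
    have hAb : |T*(σ^2*sh + b)| ≤ SA * L := by
      have h1 : |T*(σ^2*sh + b)| ≤ T*σ^2*|sh| + T*|b| := by
        calc |T*(σ^2*sh + b)| = |T*σ^2*sh + T*b| := by ring_nf
          _ ≤ |T*σ^2*sh| + |T*b| := abs_add_le _ _
          _ = T*σ^2*|sh| + T*|b| := by
              rw [abs_mul (T*σ^2) sh, abs_mul T b, abs_mul T (σ^2), abs_of_pos hT,
                abs_of_nonneg (sq_nonneg σ)]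
      have h2 : T*σ^2*|sh| ≤ T*σ^2*(4*L/δ) := mul_le_mul_of_nonneg_left hsh2 (by positivity)
      have h3 : T*σ^2*(4*L/δ) = (4*T*σ^2/δ)*L := by field_simp
      have h4 : T*|b| ≤ (T*|b|)*L := by
        nlinarith only [hL1, mul_nonneg hT.le (abs_nonneg b)]
      rw [hSAdef]
      rw [h3] at h2
      calc |T*(σ^2*sh + b)| ≤ (4*T*σ^2/δ)*L + (T*|b|)*L := by linarith only [h1, h2, h4]
        _ = (4*T*σ^2/δ + T*|b|)*L := by ring
    have hBb : |T*(σ^2*sh^2/2 + b*sh) - T*lam| ≤ SB * L^2 := by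
      have h1 : |T*(σ^2*sh^2/2 + b*sh) - T*lam| ≤
          T*σ^2*sh^2/2 + T * |b| * |sh| + T*lam := by
        calc |T*(σ^2*sh^2/2 + b*sh) - T*lam|
            = |T*σ^2*sh^2/2 + T*b*sh + -(T*lam)| := by ring_nf
          _ ≤ |T*σ^2*sh^2/2 + T*b*sh| + |-(T*lam)| := abs_add_le _ _
          _ ≤ |T*σ^2*sh^2/2| + |T*b*sh| + |-(T*lam)| := by
              have h := abs_add_le (T*σ^2*sh^2/2) (T*b*sh)
              linarith only [h, abs_nonneg (-(T*lam))]
          _ = T*σ^2*sh^2/2 + T * |b| * |sh| + T*lam := by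
              rw [abs_of_nonneg (by positivity : (0:ℝ) ≤ T*σ^2*sh^2/2), abs_neg,
                abs_of_pos (by positivity : (0:ℝ) < T*lam), abs_mul (T*b) sh,
                abs_mul T b, abs_of_pos hT]
      have h2 : T*σ^2*sh^2/2 ≤ T*σ^2*(16*L^2/δ^2)/2 := by
        have h := mul_le_mul_of_nonneg_left hsq2 (by positivity : (0:ℝ) ≤ T*σ^2)
        linarith only [h]
      have h3 : T*σ^2*(16*L^2/δ^2)/2 = (8*T*σ^2/δ^2)*L^2 := by field_simp; ring
      have h4 : T * |b| * |sh| ≤ T*|b| *(4*L/δ) :=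
        mul_le_mul_of_nonneg_left hsh2 (by positivity)
      have h5 : T*|b| *(4*L/δ) ≤ (4*T*|b|/δ)*L^2 := by
        have e : T*|b| *(4*L/δ) = (4*T*|b|/δ)*L := by field_simp
        rw [e]
        have c0 : (0:ℝ) ≤ 4*T*|b|/δ := by positivity
        have hLsq : L ≤ L^2 := by nlinarith only [hL1]
        exact mul_le_mul_of_nonneg_left hLsq c0
      have h6 : T*lam ≤ (T*lam)*L^2 := by
        have hL21 : (1:ℝ) ≤ L^2 := by nlinarith only [hL1]
        calc T*lam = (T*lam)*1 := by ring
          _ ≤ (T*lam)*L^2 := mul_le_mul_of_nonneg_left hL21 (mul_pos hT hlam).le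
      rw [hSBdef]
      rw [h3] at h2
      calc |T*(σ^2*sh^2/2 + b*sh) - T*lam|
          ≤ (8*T*σ^2/δ^2)*L^2 + (4*T*|b|/δ)*L^2 + (T*lam)*L^2 := by
            linarith only [h1, h2, h4, h5, h6]
        _ = (8*T*σ^2/δ^2 + 4*T*|b|/δ + T*lam)*L^2 := by ring
    have hsplit : m sh / (k/(δ*W)) - 1 =
        ((T*(σ^2*sh^2/2 + b*sh) - T*lam)*(δ*W))/k + (δ*W - X)/X
          - ((T*(σ^2*sh + b))*(δ*W))/(X*k) := by
      rw [hmval, hE]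
      field_simp
      ring
    rw [hsplit]
    have habs : |((T*(σ^2*sh^2/2 + b*sh) - T*lam)*(δ*W))/k + (δ*W - X)/X
          - ((T*(σ^2*sh + b))*(δ*W))/(X*k)| ≤
        |((T*(σ^2*sh^2/2 + b*sh) - T*lam)*(δ*W))/k| + |(δ*W - X)/X|
          + |((T*(σ^2*sh + b))*(δ*W))/(X*k)| := by
      have t1 := abs_sub (((T*(σ^2*sh^2/2 + b*sh) - T*lam)*(δ*W))/k + (δ*W - X)/X)
        (((T*(σ^2*sh + b))*(δ*W))/(X*k))
      have t2 := abs_add_le (((T*(σ^2*sh^2/2 + b*sh) - T*lam)*(δ*W))/k) ((δ*W - X)/X)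
      linarith only [t1, t2]
    have hcpos : (0:ℝ) ≤ C0 - 2*δ*SB := by
      rw [hC0def]
      nlinarith only [hSA0, hδ, hTσ0]
    have hcpos2 : (0:ℝ) ≤ C0 - 2*SA := by
      rw [hC0def]
      nlinarith only [hSB0, hδ, hTσ0]
    have hL40 : (0:ℝ) ≤ L^4 := by positivity
    have hLsq : L ≤ L^2 := by nlinarith only [hL1]
    have hL21 : (1:ℝ) ≤ L^2 := by nlinarith only [hL1]
    have h24 : L^2 ≤ L^4 := by nlinarith only [hL21, sq_nonneg L]
    have hT1 : |((T*(σ^2*sh^2/2 + b*sh) - T*lam)*(δ*W))/k| ≤ LL/L := by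
      rw [abs_div, abs_of_pos hk0, div_le_div_iff₀ hk0 hL0]
      have e1 : |(T*(σ^2*sh^2/2 + b*sh) - T*lam)*(δ*W)| =
          |T*(σ^2*sh^2/2 + b*sh) - T*lam| *(δ*W) := by
        rw [abs_mul, abs_of_nonneg (by positivity : (0:ℝ) ≤ δ*W)]
      rw [e1]
      have e2 : |T*(σ^2*sh^2/2 + b*sh) - T*lam| *(δ*W) ≤ (SB*L^2)*(δ*(2*L)) := by
        apply mul_le_mul hBb _ (by positivity) (by positivity)
        nlinarith only [hWL, hδ]
      have e4 : 2*δ*SB*L^4 ≤ k := by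
        have c1 : 2*δ*SB*L^4 ≤ C0*L^4 := by nlinarith only [mul_nonneg hcpos hL40]
        linarith only [c1, hC0']
      have e5 : k ≤ LL*k := by nlinarith only [hLL1, hk0]
      calc |T*(σ^2*sh^2/2 + b*sh) - T*lam| *(δ*W)*L ≤ (SB*L^2)*(δ*(2*L))*L := by
            apply mul_le_mul_of_nonneg_right e2 hL0.le
        _ = 2*δ*SB*L^4 := by ring
        _ ≤ LL*k := by linarith only [e4, e5]
    have hT2 : |(δ*W - X)/X| ≤ 2*LL/L := by
      have hnum0 : (0:ℝ) ≤ δ*W - X := by linarith only [hXu]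
      rw [abs_div, abs_of_nonneg hnum0, abs_of_pos hX0, div_le_div_iff₀ hX0 hL0]
      have p1 : (δ*W - X) * L ≤ (δ*LL/v)*L :=
        mul_le_mul_of_nonneg_right (by linarith only [hXl]) hL0.le
      have p2 : (δ*LL/v)*L = δ*LL*v := by rw [← hv2]; field_simp
      have p4 : δ*LL*v ≤ δ*LL*W := by
        have h := mul_le_mul_of_nonneg_left hvW (mul_nonneg hδ.le hLL0)
        calc δ*LL*v = (δ*LL)*v := by ring
          _ ≤ (δ*LL)*W := h
          _ = δ*LL*W := by ring
      have p6 : LL*(δ*W) ≤ LL*(2*X) :=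
        mul_le_mul_of_nonneg_left (by linarith only [hRX]) hLL0
      calc (δ*W - X)*L ≤ δ*LL*v := by rw [← p2]; exact p1
        _ ≤ LL*(δ*W) := by linarith only [p4]
        _ ≤ LL*(2*X) := p6
        _ = 2*LL*X := by ring
    have hT3 : |((T*(σ^2*sh + b))*(δ*W))/(X*k)| ≤ LL/L := by
      have hXk : (0:ℝ) < X*k := mul_pos hX0 hk0
      rw [abs_div, abs_of_pos hXk, div_le_div_iff₀ hXk hL0]
      have e1 : |(T*(σ^2*sh + b))*(δ*W)| = |T*(σ^2*sh + b)| *(δ*W) := by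
        rw [abs_mul, abs_of_nonneg (by positivity : (0:ℝ) ≤ δ*W)]
      rw [e1]
      have e2 : |T*(σ^2*sh + b)| *(δ*W) ≤ (SA*L)*(2*X) := by
        apply mul_le_mul hAb (by linarith only [hRX]) (by positivity)
          (mul_nonneg hSA0 hL0.le)
      have e3 : 2*SA*L^2 ≤ LL*k := by
        have c1 : 2*SA*L^2 ≤ 2*SA*L^4 :=
          mul_le_mul_of_nonneg_left h24 (by linarith only [hSA0])
        have c2 : 2*SA*L^4 ≤ C0*L^4 := by nlinarith only [mul_nonneg hcpos2 hL40]
        have e5 : k ≤ LL*k := by nlinarith only [hLL1, hk0]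
        linarith only [c1, c2, hC0', e5]
      calc |T*(σ^2*sh + b)| *(δ*W)*L ≤ (SA*L)*(2*X)*L := by
            apply mul_le_mul_of_nonneg_right e2 hL0.le
        _ = (2*SA*L^2)*X := by ring
        _ ≤ (LL*k)*X := mul_le_mul_of_nonneg_right e3 hX0.le
        _ = LL*(X*k) := by ring
    have hrhs : |LL/L| = LL/L := abs_of_nonneg (div_nonneg hLL0 hL0.le)
    rw [hrhs]
    have hq0 : (0:ℝ) ≤ LL/L := div_nonneg hLL0 hL0.le
    have hsum := add_le_add (add_le_add hT1 hT2) hT3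
    have heq4 : LL/L + 2*LL/L + LL/L = 4*(LL/L) := by ring
    have hfin : (4:ℝ)*(LL/L) ≤ 5*(LL/L) := by linarith only [hq0]
    linarith only [habs, hsum, heq4.le, heq4.ge, hfin]
  · -- second asymptotic
    rw [Asymptotics.isBigO_iff]
    refine ⟨5, ?_⟩
    filter_upwards [heqF, hsand, hpack, ev_logpow_le C0 4, eventually_gt_atTop (0:ℝ)]
      with k heq hs hp hC0' hk0
    simp only [hd2, hF2def, Real.norm_eq_abs]
    obtain ⟨hXl, hXu⟩ := hs
    obtain ⟨h8, hLL1, hLL2, hμ, hR1, -, -⟩ := hp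
    simp only [hFdef] at heq
    set L := Real.log k with hLdef
    set LL := Real.log L with hLLdef
    set v := Real.sqrt L with hvdef
    set W := Real.sqrt (2*L) with hWdef
    set sh := shat k with hshdef
    have hL0 : (0:ℝ) < L := by linarith only [h8]
    have hL1 : (1:ℝ) ≤ L := by linarith only [h8]
    have hv0 : (0:ℝ) < v := Real.sqrt_pos.2 hL0
    have hv2 : v^2 = L := Real.sq_sqrt hL0.le
    have hW0 : (0:ℝ) ≤ W := Real.sqrt_nonneg _
    have hW2 : W^2 = 2*L := Real.sq_sqrt (by linarith only [hL0])
    have hW4 : (4:ℝ) ≤ W := by nlinarith only [hW2, hW0, h8]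
    have hWv : W = Real.sqrt 2 * v := by rw [hWdef, hvdef, Real.sqrt_mul (by norm_num)]
    have hs2 : (1:ℝ) ≤ Real.sqrt 2 := by
      rw [show (1:ℝ) = Real.sqrt 1 by simp]
      exact Real.sqrt_le_sqrt (by norm_num)
    have hv2' : (2:ℝ) ≤ v := by nlinarith only [hv2, h8, hv0]
    have hvL : v ≤ L := by nlinarith only [hv2, hv2']
    have hLL0 : (0:ℝ) ≤ LL := le_trans zero_le_one hLL1
    have hLLv : LL ≤ v := by nlinarith only [hLL2, hv2, hLL0, hv0]
    have hW2v : W ≤ 2*v := by nlinarith only [hW2, hv2, hW0, hv0]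
    have hWL : W ≤ 2*L := by linarith only [hW2v, hvL, hv0]
    have hvW : v ≤ W := by nlinarith only [hWv, hs2, hv0]
    set X := δ^2 * sh + μ with hXdef
    set E := Real.exp (δ ^ 2 * sh ^ 2 / 2 + μ * sh) with hEdef
    have hq : δ * LL / v ≤ δ := by
      rw [div_le_iff₀ hv0]
      nlinarith only [hLLv, hδ, hLL0]
    have hRX : δ*W/2 ≤ X := by
      have h1 : δ ≤ δ*W/2 := by nlinarith only [hW4, hδ]
      linarith only [hXl, hq, h1]
    have hWpos : (0:ℝ) < W := lt_of_lt_of_le (by norm_num) hW4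
    have hX0 : (0:ℝ) < X := lt_of_lt_of_le (by positivity) hRX
    have hsheq : sh = (X - μ)/δ^2 := by rw [hXdef]; field_simp; ring
    have hE : T*lam*E = (k - T*(σ^2*sh + b))/X := by
      rw [eq_div_iff hX0.ne']
      linear_combination heq
    clear_value sh X E v W LL L
    have hshabs : |sh| ≤ 2*W/δ := by
      rw [hsheq, abs_div, abs_of_pos hδ2, div_le_div_iff₀ hδ2 hδ]
      have h1 : |X - μ| ≤ |X| + |μ| := abs_sub _ _
      have h2 : |X| = X := abs_of_pos hX0
      have h3 : |X - μ| ≤ 2*(δ*W) := by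
        rw [h2] at h1
        linarith only [h1, hμ, hXu]
      calc |X - μ| * δ ≤ (2*(δ*W)) * δ := by
            nlinarith only [h3, hδ, abs_nonneg (X - μ)]
        _ = 2*W*δ^2 := by ring
    have hsh2 : |sh| ≤ 4*L/δ := by
      refine hshabs.trans ?_
      rw [div_le_div_iff₀ hδ hδ]
      nlinarith only [hWL, hδ]
    have hAb : |T*(σ^2*sh + b)| ≤ SA * L := by
      have h1 : |T*(σ^2*sh + b)| ≤ T*σ^2*|sh| + T*|b| := by
        calc |T*(σ^2*sh + b)| = |T*σ^2*sh + T*b| := by ring_nf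
          _ ≤ |T*σ^2*sh| + |T*b| := abs_add_le _ _
          _ = T*σ^2*|sh| + T*|b| := by
              rw [abs_mul (T*σ^2) sh, abs_mul T b, abs_mul T (σ^2), abs_of_pos hT,
                abs_of_nonneg (sq_nonneg σ)]
      have h2 : T*σ^2*|sh| ≤ T*σ^2*(4*L/δ) := mul_le_mul_of_nonneg_left hsh2 (by positivity)
      have h3 : T*σ^2*(4*L/δ) = (4*T*σ^2/δ)*L := by field_simp
      have h4 : T*|b| ≤ (T*|b|)*L := by
        nlinarith only [hL1, mul_nonneg hT.le (abs_nonneg b)]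
      rw [hSAdef]
      rw [h3] at h2
      calc |T*(σ^2*sh + b)| ≤ (4*T*σ^2/δ)*L + (T*|b|)*L := by linarith only [h1, h2, h4]
        _ = (4*T*σ^2/δ + T*|b|)*L := by ring
    -- eventual size facts
    have hcposA : (0:ℝ) ≤ C0 - 2*SA := by
      rw [hC0def]
      nlinarith only [hSB0, hδ, hTσ0]
    have hcposT : (0:ℝ) ≤ C0 - T*σ^2 := by
      rw [hC0def]
      nlinarith only [hSA0, hSB0, hδ, hTσ0]
    have hL40 : (0:ℝ) ≤ L^4 := by positivity
    have hLsq : L ≤ L^2 := by nlinarith only [hL1]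
    have hL21 : (1:ℝ) ≤ L^2 := by nlinarith only [hL1]
    have h24 : L^2 ≤ L^4 := by nlinarith only [hL21, sq_nonneg L]
    have hL31 : (1:ℝ) ≤ L^3 := by nlinarith only [hL1, hL21]
    have hL14 : L ≤ L^4 := by nlinarith only [hL31, hL0]
    have hSAk : SA*L^2 ≤ k := by
      have c1' : SA*L^2 ≤ SA*L^4 := mul_le_mul_of_nonneg_left h24 hSA0
      have c1 : SA*L^2 ≤ 2*SA*L^4 := by
        have := mul_nonneg hSA0 hL40
        linarith only [c1', this]
      have c2 : 2*SA*L^4 ≤ C0*L^4 := by nlinarith only [mul_nonneg hcposA hL40]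
      linarith only [c1, c2, hC0']
    have hTσk : T*σ^2*L ≤ k := by
      have c1 : T*σ^2*L ≤ T*σ^2*L^4 := mul_le_mul_of_nonneg_left hL14 hTσ0
      have c2 : T*σ^2*L^4 ≤ C0*L^4 := by nlinarith only [mul_nonneg hcposT hL40]
      linarith only [c1, c2, hC0']
    have hval2 : T*lam*((X^2 + δ^2)*E) = (X^2+δ^2)*((k - T*(σ^2*sh+b))/X) := by
      rw [← hE]; ring
    have hsplit2 : (T * σ ^ 2 + T * lam * ((X^2 + δ ^ 2) * E))/(δ*k*W) - 1 =
        T*σ^2/(k*(δ*W)) + (X - δ*W)/(δ*W) - (X*(T*(σ^2*sh+b)))/((δ*W)*k)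
          + δ^2*(k - T*(σ^2*sh+b))/(X*k*(δ*W)) := by
      rw [hval2]
      field_simp
      ring
    rw [hsplit2]
    have habs : |T*σ^2/(k*(δ*W)) + (X - δ*W)/(δ*W) - (X*(T*(σ^2*sh+b)))/((δ*W)*k)
          + δ^2*(k - T*(σ^2*sh+b))/(X*k*(δ*W))| ≤
        |T*σ^2/(k*(δ*W))| + |(X - δ*W)/(δ*W)| + |(X*(T*(σ^2*sh+b)))/((δ*W)*k)|
          + |δ^2*(k - T*(σ^2*sh+b))/(X*k*(δ*W))| := by
      have t1 := abs_add_le (T*σ^2/(k*(δ*W)) + (X - δ*W)/(δ*W)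
          - (X*(T*(σ^2*sh+b)))/((δ*W)*k)) (δ^2*(k - T*(σ^2*sh+b))/(X*k*(δ*W)))
      have t2 := abs_sub (T*σ^2/(k*(δ*W)) + (X - δ*W)/(δ*W))
        ((X*(T*(σ^2*sh+b)))/((δ*W)*k))
      have t3 := abs_add_le (T*σ^2/(k*(δ*W))) ((X - δ*W)/(δ*W))
      linarith only [t1, t2, t3]
    have hkW0 : (0:ℝ) < k*(δ*W) := by positivity
    have hu1 : |T*σ^2/(k*(δ*W))| ≤ 1/v := by
      rw [abs_div, abs_of_pos hkW0, abs_of_nonneg hTσ0, div_le_div_iff₀ hkW0 hv0]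
      have c1 : T*σ^2*v ≤ T*σ^2*L := mul_le_mul_of_nonneg_left hvL hTσ0
      have c2 : k ≤ k*(δ*W) := by nlinarith only [hR1, hk0]
      calc T*σ^2*v ≤ k := by linarith only [c1, hTσk]
        _ ≤ k*(δ*W) := c2
        _ = 1*(k*(δ*W)) := by ring
    have hδW0 : (0:ℝ) < δ*W := by positivity
    have hu2 : |(X - δ*W)/(δ*W)| ≤ 1/v := by
      have e0 : |X - δ*W| = δ*W - X := by
        rw [abs_sub_comm, abs_of_nonneg (by linarith only [hXu])]
      rw [abs_div, abs_of_pos hδW0, e0, div_le_div_iff₀ hδW0 hv0]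
      have p1 : (δ*W - X)*v ≤ (δ*LL/v)*v :=
        mul_le_mul_of_nonneg_right (by linarith only [hXl]) hv0.le
      have p2 : (δ*LL/v)*v = δ*LL := by field_simp
      have p3 : δ*LL ≤ δ*W := by nlinarith only [hLLv, hvW, hδ, hLL0]
      calc (δ*W - X)*v ≤ δ*LL := by rw [← p2]; exact p1
        _ ≤ δ*W := p3
        _ = 1*(δ*W) := by ring
    have hu3 : |(X*(T*(σ^2*sh+b)))/((δ*W)*k)| ≤ 1/v := by
      have hd0 : (0:ℝ) < (δ*W)*k := by positivity
      rw [abs_div, abs_of_pos hd0, div_le_div_iff₀ hd0 hv0]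
      have e1 : |X*(T*(σ^2*sh+b))| = X*|T*(σ^2*sh+b)| := by
        rw [abs_mul, abs_of_pos hX0]
      rw [e1]
      have e2 : X*|T*(σ^2*sh+b)| ≤ (δ*W)*(SA*L) :=
        mul_le_mul hXu hAb (abs_nonneg _) (by positivity)
      have e3 : SA*L*v ≤ SA*L^2 := by
        have h := mul_le_mul_of_nonneg_left hvL (mul_nonneg hSA0 hL0.le)
        calc SA*L*v = (SA*L)*v := by ring
          _ ≤ (SA*L)*L := h
          _ = SA*L^2 := by ring
      calc X*|T*(σ^2*sh+b)| *v ≤ (δ*W)*(SA*L)*v := by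
            apply mul_le_mul_of_nonneg_right e2 hv0.le
        _ = (δ*W)*(SA*L*v) := by ring
        _ ≤ (δ*W)*(SA*L^2) := by
            apply mul_le_mul_of_nonneg_left e3 hδW0.le
        _ ≤ (δ*W)*k := by
            apply mul_le_mul_of_nonneg_left hSAk hδW0.le
        _ = 1*((δ*W)*k) := by ring
    have hu4 : |δ^2*(k - T*(σ^2*sh+b))/(X*k*(δ*W))| ≤ 1/v := by
      have hd0 : (0:ℝ) < X*k*(δ*W) := by positivity
      rw [abs_div, abs_of_pos hd0, div_le_div_iff₀ hd0 hv0]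
      have e1 : |δ^2*(k - T*(σ^2*sh+b))| = δ^2*|k - T*(σ^2*sh+b)| := by
        rw [abs_mul, abs_of_pos hδ2]
      rw [e1]
      have c1 : |k - T*(σ^2*sh+b)| ≤ 2*k := by
        have t1 : |k - T*(σ^2*sh+b)| ≤ |k| + |T*(σ^2*sh+b)| := abs_sub _ _
        have t2 : |k| = k := abs_of_pos hk0
        have t3 : SA*L ≤ k := by
          have h := mul_le_mul_of_nonneg_left hLsq hSA0
          have h2 : SA*L ≤ SA*L^2 := by
            calc SA*L = SA*L := rfl
              _ ≤ SA*L^2 := h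
          linarith only [h2, hSAk]
        rw [t2] at t1
        linarith only [t1, hAb, t3]
      have c2 : δ^2*|k - T*(σ^2*sh+b)| *v ≤ δ^2*(2*k)*v :=
        mul_le_mul_of_nonneg_right (mul_le_mul_of_nonneg_left c1 hδ2.le) hv0.le
      have c3 : δ^2*(2*k)*v ≤ δ^2*L*k := by
        have h2v : 2*v ≤ L := by nlinarith only [hv2, hv2']
        have h := mul_le_mul_of_nonneg_left h2v (mul_nonneg hδ2.le hk0.le)
        calc δ^2*(2*k)*v = (δ^2*k)*(2*v) := by ring
          _ ≤ (δ^2*k)*L := h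
          _ = δ^2*L*k := by ring
      have c4 : δ^2*L*k ≤ X*k*(δ*W) := by
        have d1 : (δ*W/2)*(δ*W) ≤ X*(δ*W) :=
          mul_le_mul_of_nonneg_right hRX hδW0.le
        have d2 : (δ*W/2)*(δ*W) = δ^2*W^2/2 := by ring
        have d3 : δ^2*W^2/2 = δ^2*L := by rw [hW2]; ring
        have d4 : δ^2*L ≤ X*(δ*W) := by
          rw [← d3, ← d2]; exact d1
        calc δ^2*L*k = (δ^2*L)*k := by ring
          _ ≤ (X*(δ*W))*k := mul_le_mul_of_nonneg_right d4 hk0.le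
          _ = X*k*(δ*W) := by ring
      calc δ^2*|k - T*(σ^2*sh+b)| *v ≤ δ^2*(2*k)*v := c2
        _ ≤ δ^2*L*k := c3
        _ ≤ X*k*(δ*W) := c4
        _ = 1*(X*k*(δ*W)) := by ring
    have hrhs : |1/v| = 1/v := abs_of_pos (by positivity)
    rw [hrhs]
    have hq0 : (0:ℝ) ≤ 1/v := by positivity
    have hsum := add_le_add (add_le_add (add_le_add hu1 hu2) hu3) hu4
    have hfin : 1/v + 1/v + 1/v + 1/v ≤ 5*(1/v) := by linarith only [hq0]
    linarith only [habs, hsum, hfin]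
end
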